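/- arXiv:0710.4981 — 8 statements merged into one kernel-verified Lean document; each statement's English description precedes it below -/
import Mathlib

section
/- Let p be a fixed odd prime and let q ∈ ℚ_p satisfy ‖q − 1‖_p < 1. For every continuous function f : ℤ_p → ℚ_p, the sequence N ↦ (1/[p^N]_{−q}) · Σ_{x=0}^{p^N − 1} f(x)(−q)^x converges in ℚ_p as N → ∞; that is, the fermionic p-adic q-integral I_{−q}(f) exists. -/
open Filter Finset

lemma aux_cauchy {p : ℕ} [Fact p.Prime] {a : ℕ → ℚ_[p]}
    (h : ∀ ε : ℝ, 0 < ε → ∃ N0, ∀ N ≥ N0, ‖a (N + 1) - a N‖ ≤ ε) : CauchySeq a := by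
  rw [Metric.cauchySeq_iff']
  intro ε hε
  obtain ⟨N0, hN0⟩ := h (ε / 2) (by positivity)
  refine ⟨N0, fun n hn => ?_⟩
  have key : ∀ m, N0 ≤ m → dist (a m) (a N0) ≤ ε / 2 := by
    intro m hm
    induction m, hm using Nat.le_induction with
    | base => simp [dist_self]; positivity
    | succ m hm ih =>
      have h1 : dist (a (m + 1)) (a m) ≤ ε / 2 := by
        rw [dist_eq_norm]; exact hN0 m hm
      calc dist (a (m+1)) (a N0) ≤ max (dist (a (m+1)) (a m)) (dist (a m) (a N0)) :=
            IsUltrametricDist.dist_triangle_max _ _ _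
        _ ≤ ε / 2 := max_le h1 ih
  exact lt_of_le_of_lt (key n hn) (by linarith)

lemma aux_sum_mul {M : Type*} [AddCommMonoid M] (g : ℕ → M) (a b : ℕ) :
    ∑ x ∈ Finset.range (a * b), g x
      = ∑ j ∈ Finset.range b, ∑ y ∈ Finset.range a, g (a * j + y) := by
  induction b with
  | zero => simp
  | succ b ih =>
    rw [Nat.mul_succ, Finset.sum_range_add, ih, Finset.sum_range_succ]

lemma aux_pow_sub_pow {p : ℕ} [Fact p.Prime] (a b : ℚ_[p]) (ha : ‖a‖ ≤ 1) (hb : ‖b‖ ≤ 1)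
    (j : ℕ) : ‖a ^ j - b ^ j‖ ≤ ‖a - b‖ := by
  induction j with
  | zero => simp
  | succ j ih =>
    have heq : a ^ (j+1) - b ^ (j+1) = a ^ j * (a - b) + b * (a ^ j - b ^ j) := by ring
    rw [heq]
    refine le_trans (Padic.nonarchimedean _ _) (max_le ?_ ?_)
    · rw [norm_mul]
      calc ‖a ^ j‖ * ‖a - b‖ ≤ 1 * ‖a - b‖ := by
            apply mul_le_mul_of_nonneg_right _ (norm_nonneg _)
            simpa using pow_le_one₀ (norm_nonneg a) ha
        _ = ‖a - b‖ := one_mul _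
    · rw [norm_mul]
      calc ‖b‖ * ‖a ^ j - b ^ j‖ ≤ 1 * ‖a - b‖ :=
            mul_le_mul hb ih (norm_nonneg _) zero_le_one
        _ = ‖a - b‖ := one_mul _

lemma aux_step {p : ℕ} [Fact p.Prime] (r : ℚ_[p]) (h : ‖r - 1‖ ≤ (p : ℝ)⁻¹) :
    ‖r ^ p - 1‖ ≤ (p : ℝ)⁻¹ * ‖r - 1‖ := by
  set t := r - 1 with ht
  have hp1 : (1 : ℝ) < p := by exact_mod_cast (Fact.out : p.Prime).one_lt
  have hpinv : (p : ℝ)⁻¹ ≤ 1 := inv_le_one_of_one_le₀ hp1.le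
  have hpinv0 : (0:ℝ) ≤ (p : ℝ)⁻¹ := by positivity
  have htle : ‖t‖ ≤ 1 := h.trans hpinv
  have hr : r = t + 1 := by rw [ht]; ring
  have hexp : r ^ p - 1 = ∑ k ∈ Finset.range p, t ^ (k + 1) * (p.choose (k + 1) : ℚ_[p]) := by
    rw [hr, add_pow]
    simp only [one_pow, mul_one]
    rw [Finset.sum_range_succ' (fun k => t ^ k * (p.choose k : ℚ_[p])) p]
    simp
  rw [hexp]
  apply IsUltrametricDist.norm_sum_le_of_forall_le_of_nonneg
  · positivity
  · intro k hk
    rw [norm_mul, norm_pow]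
    have hCle : ‖((p.choose (k+1) : ℕ) : ℚ_[p])‖ ≤ 1 := by
      have := Padic.norm_int_le_one (p := p) (p.choose (k+1) : ℤ)
      simpa using this
    rcases Nat.eq_zero_or_pos k with hk0 | hk1
    · subst hk0
      rw [zero_add, pow_one, Nat.choose_one_right, Padic.norm_p, mul_comm]
    · calc ‖t‖ ^ (k+1) * ‖((p.choose (k+1) : ℕ) : ℚ_[p])‖
          ≤ ‖t‖ ^ (k+1) * 1 := by
            apply mul_le_mul_of_nonneg_left hCle (by positivity)
        _ = ‖t‖ ^ (k+1) := mul_one _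
        _ ≤ ‖t‖ ^ 2 := pow_le_pow_of_le_one (norm_nonneg t) htle (by omega)
        _ = ‖t‖ * ‖t‖ := sq ‖t‖
        _ ≤ (p : ℝ)⁻¹ * ‖t‖ := mul_le_mul_of_nonneg_right h (norm_nonneg t)

lemma aux_pow_pow {p : ℕ} [Fact p.Prime] (q : ℚ_[p]) (h : ‖q - 1‖ ≤ (p : ℝ)⁻¹) (N : ℕ) :
    ‖q ^ p ^ N - 1‖ ≤ (p : ℝ)⁻¹ ^ N * ‖q - 1‖ := by
  have hp1 : (1 : ℝ) < p := by exact_mod_cast (Fact.out : p.Prime).one_lt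
  have hpinv : (p : ℝ)⁻¹ ≤ 1 := inv_le_one_of_one_le₀ hp1.le
  have hpinv0 : (0:ℝ) ≤ (p : ℝ)⁻¹ := by positivity
  induction N with
  | zero => simp
  | succ N ih =>
    have hsmall : ‖q ^ p ^ N - 1‖ ≤ (p : ℝ)⁻¹ := by
      refine ih.trans ?_
      calc (p : ℝ)⁻¹ ^ N * ‖q - 1‖ ≤ 1 ^ N * (p:ℝ)⁻¹ := by
            apply mul_le_mul (pow_le_pow_left₀ hpinv0 hpinv N) h (norm_nonneg _) (by positivity)
        _ = (p:ℝ)⁻¹ := by simp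
    have := aux_step (q ^ p ^ N) hsmall
    rw [← pow_mul, ← pow_succ] at this
    refine this.trans ?_
    rw [pow_succ]
    calc (p:ℝ)⁻¹ * ‖q ^ p ^ N - 1‖ ≤ (p:ℝ)⁻¹ * ((p : ℝ)⁻¹ ^ N * ‖q - 1‖) :=
          mul_le_mul_of_nonneg_left ih hpinv0
      _ = (p : ℝ)⁻¹ ^ N * (p:ℝ)⁻¹ * ‖q - 1‖ := by ring

theorem stmt_1 (p : ℕ) [Fact p.Prime] (hp : Odd p)
    (q : ℚ_[p]) (hq : ‖q - 1‖ < 1)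
    (f : C(ℤ_[p], ℚ_[p])) :
    ∃ L : ℚ_[p],
      Tendsto
        (fun N : ℕ =>
          (1 / ((1 + q ^ p ^ N) / (1 + q))) *
            ∑ x ∈ Finset.range (p ^ N), f (x : ℤ_[p]) * (-q) ^ x)
        atTop (nhds L) := by
  have hprime : p.Prime := Fact.out
  have hp1 : (1 : ℝ) < p := by exact_mod_cast hprime.one_lt
  have hpinv1 : (p:ℝ)⁻¹ < 1 := by
    rw [inv_lt_one_iff₀]; right; exact hp1
  have hpinv0 : (0:ℝ) ≤ (p:ℝ)⁻¹ := by positivity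
  -- ‖q - 1‖ ≤ p⁻¹
  have hq1 : ‖q - 1‖ ≤ (p:ℝ)⁻¹ := by
    have h := (Padic.norm_le_pow_iff_norm_lt_pow_add_one (q - 1) (-1)).mpr (by simpa using hq)
    simpa using h
  have hqnorm : ‖q‖ = 1 := by
    have hrw : q = (q - 1) + 1 := by ring
    rw [hrw, Padic.add_eq_max_of_ne (by rw [norm_one]; exact ne_of_lt hq),
      norm_one, max_eq_right hq.le]
  have hmqnorm : ∀ x : ℕ, ‖(-q) ^ x‖ = 1 := by
    intro x; rw [norm_pow, norm_neg, hqnorm, one_pow]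
  have h2 : ‖(2 : ℚ_[p])‖ = 1 := by
    have hle : ‖(2:ℚ_[p])‖ ≤ 1 := by
      have := Padic.norm_int_le_one (p := p) 2
      simpa using this
    have hnlt : ¬ ‖(2:ℚ_[p])‖ < 1 := by
      intro hlt
      have : (p:ℤ) ∣ 2 := by
        rw [← Padic.norm_intCast_lt_one_iff]
        simpa using hlt
      have hpd : p ∣ 2 := by exact_mod_cast this
      have := (Nat.prime_dvd_prime_iff_eq hprime Nat.prime_two).mp hpd
      rw [this] at hp
      exact (Nat.not_odd_iff_even.mpr (by decide)) hp
    exact le_antisymm hle (not_lt.mp hnlt)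
  have h1q : ‖1 + q‖ = 1 := by
    have hrw : 1 + q = (q - 1) + 2 := by ring
    rw [hrw, Padic.add_eq_max_of_ne (by rw [h2]; exact ne_of_lt hq), h2,
      max_eq_right hq.le]
  have h1qne : (1 + q) ≠ 0 := by
    intro h; rw [h, norm_zero] at h1q; norm_num at h1q
  have hqpow := aux_pow_pow q hq1
  -- q ^ p ^ N → 1
  have hlim : Tendsto (fun N : ℕ => q ^ p ^ N) atTop (nhds 1) := by
    rw [tendsto_iff_norm_sub_tendsto_zero]
    apply squeeze_zero (fun N => norm_nonneg _) hqpow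
    have h0 : Tendsto (fun N : ℕ => (p:ℝ)⁻¹ ^ N * ‖q - 1‖) atTop (nhds (0 * ‖q - 1‖)) :=
      (tendsto_pow_atTop_nhds_zero_of_lt_one hpinv0 hpinv1).mul_const _
    simpa using h0
  have hne : ((1:ℚ_[p]) + 1) / (1 + q) ≠ 0 := by
    apply div_ne_zero _ h1qne
    intro h
    have : ((2:ℚ_[p])) = 0 := by rw [← h]; norm_num
    rw [this, norm_zero] at h2; norm_num at h2
  have hcoef : Tendsto (fun N : ℕ => 1 / ((1 + q ^ p ^ N) / (1 + q))) atTop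
      (nhds (1 / ((1 + 1) / (1 + q)))) := by
    apply Tendsto.div tendsto_const_nhds _ hne
    exact (tendsto_const_nhds.add hlim).div_const _
  set T : ℕ → ℚ_[p] := fun N => ∑ x ∈ Finset.range (p ^ N), f (x : ℤ_[p]) * (-q) ^ x with hTdef
  have hcauchy : CauchySeq T := by
    apply aux_cauchy
    intro ε hε
    have huc := CompactSpace.uniformContinuous_of_continuous f.continuous
    rw [Metric.uniformContinuous_iff] at huc
    obtain ⟨δ, hδ, hucd⟩ := huc ε hε
    have hev1 : ∀ᶠ N : ℕ in atTop, (p:ℝ)⁻¹ ^ N < δ :=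
      (tendsto_pow_atTop_nhds_zero_of_lt_one hpinv0 hpinv1).eventually_lt_const hδ
    have hev2 : ∀ᶠ N : ℕ in atTop, ‖f‖ * ((p:ℝ)⁻¹ ^ N * ‖q - 1‖) < ε := by
      have h0 : Tendsto (fun N : ℕ => ‖f‖ * ((p:ℝ)⁻¹ ^ N * ‖q - 1‖)) atTop (nhds (‖f‖ * (0 * ‖q - 1‖))) :=
        (((tendsto_pow_atTop_nhds_zero_of_lt_one hpinv0 hpinv1).mul_const _).const_mul _)
      simp only [zero_mul, mul_zero] at h0
      exact h0.eventually_lt_const hε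
    obtain ⟨N0, hN0⟩ := Filter.eventually_atTop.mp (hev1.and hev2)
    refine ⟨N0, fun N hN => ?_⟩
    obtain ⟨hA, hB⟩ := hN0 N hN
    -- split the sum
    have hsplit : T (N + 1) = ∑ j ∈ Finset.range p, ∑ y ∈ Finset.range (p ^ N),
        f ((p ^ N * j + y : ℕ) : ℤ_[p]) * (-q) ^ (p ^ N * j + y) := by
      rw [hTdef]
      simp only [pow_succ]
      exact aux_sum_mul _ _ _
    have hTN : T N = ∑ j ∈ Finset.range p, ∑ y ∈ Finset.range (p ^ N),
        (f ((y : ℕ) : ℤ_[p]) * (-q) ^ y) * (-1 : ℚ_[p]) ^ j := by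
      have : ∑ j ∈ Finset.range p, ∑ y ∈ Finset.range (p ^ N),
          (f ((y : ℕ) : ℤ_[p]) * (-q) ^ y) * (-1 : ℚ_[p]) ^ j
          = (∑ y ∈ Finset.range (p ^ N), f ((y : ℕ) : ℤ_[p]) * (-q) ^ y)
            * ∑ j ∈ Finset.range p, (-1 : ℚ_[p]) ^ j := by
        rw [Finset.mul_sum]
        exact Finset.sum_congr rfl fun j _ => (Finset.sum_mul _ _ _).symm
      rw [this, neg_one_geom_sum, if_neg (Nat.not_even_iff_odd.mpr hp), mul_one]
    rw [hsplit, hTN, ← Finset.sum_sub_distrib]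
    apply IsUltrametricDist.norm_sum_le_of_forall_le_of_nonneg hε.le
    intro j hj
    rw [← Finset.sum_sub_distrib]
    apply IsUltrametricDist.norm_sum_le_of_forall_le_of_nonneg hε.le
    intro y hy
    -- termwise bound
    have hfact : ((-q) ^ (p ^ N * j + y) : ℚ_[p]) = (-q) ^ y * ((-q) ^ p ^ N) ^ j := by
      rw [pow_add, pow_mul]; ring
    rw [hfact]
    have hterm : f ((p ^ N * j + y : ℕ) : ℤ_[p]) * ((-q) ^ y * ((-q) ^ p ^ N) ^ j)
        - f ((y : ℕ) : ℤ_[p]) * (-q) ^ y * (-1 : ℚ_[p]) ^ j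
        = (-q) ^ y * ((f ((p ^ N * j + y : ℕ) : ℤ_[p]) - f ((y : ℕ) : ℤ_[p])) * ((-q) ^ p ^ N) ^ j
            + f ((y : ℕ) : ℤ_[p]) * (((-q) ^ p ^ N) ^ j - (-1 : ℚ_[p]) ^ j)) := by
      ring
    rw [hterm, norm_mul, hmqnorm y, one_mul]
    refine le_trans (Padic.nonarchimedean _ _) (max_le ?_ ?_)
    · -- uniform continuity part
      rw [norm_mul, norm_pow, hmqnorm (p ^ N), one_pow, mul_one]
      have hdist : dist ((p ^ N * j + y : ℕ) : ℤ_[p]) ((y : ℕ) : ℤ_[p]) < δ := by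
        rw [dist_eq_norm]
        have hcast : ((p ^ N * j + y : ℕ) : ℤ_[p]) - ((y : ℕ) : ℤ_[p])
            = (p : ℤ_[p]) ^ N * (j : ℤ_[p]) := by push_cast; ring
        rw [hcast]
        calc ‖(p : ℤ_[p]) ^ N * (j : ℤ_[p])‖ ≤ ‖(p : ℤ_[p]) ^ N‖ * ‖(j : ℤ_[p])‖ := norm_mul_le _ _
          _ ≤ ‖(p : ℤ_[p]) ^ N‖ * 1 :=
              mul_le_mul_of_nonneg_left (PadicInt.norm_le_one _) (norm_nonneg _)
          _ = (p:ℝ)⁻¹ ^ N := by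
              rw [mul_one, PadicInt.norm_p_pow, zpow_neg, zpow_natCast, inv_pow]
          _ < δ := hA
      have := hucd hdist
      rw [dist_eq_norm] at this
      exact this.le
    · -- q-power part
      rw [norm_mul]
      have hodd : Odd (p ^ N) := hp.pow
      have haneg : ((-q) ^ p ^ N : ℚ_[p]) = -(q ^ p ^ N) := hodd.neg_pow q
      have hsub : ‖((-q) ^ p ^ N) ^ j - (-1 : ℚ_[p]) ^ j‖ ≤ ‖q ^ p ^ N - 1‖ := by
        have h1 : ‖((-q) ^ p ^ N : ℚ_[p])‖ ≤ 1 := by rw [hmqnorm (p ^ N)]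
        have h2' : ‖(-1 : ℚ_[p])‖ ≤ 1 := by rw [norm_neg, norm_one]
        have := aux_pow_sub_pow ((-q) ^ p ^ N) (-1) h1 h2' j
        refine this.trans (le_of_eq ?_)
        rw [haneg]
        rw [show -(q ^ p ^ N) - (-1 : ℚ_[p]) = -(q ^ p ^ N - 1) by ring, norm_neg]
      calc ‖f ((y : ℕ) : ℤ_[p])‖ * ‖((-q) ^ p ^ N) ^ j - (-1 : ℚ_[p]) ^ j‖
          ≤ ‖f‖ * ((p:ℝ)⁻¹ ^ N * ‖q - 1‖) := by
            apply mul_le_mul (f.norm_coe_le_norm _) (hsub.trans (hqpow N)) (norm_nonneg _)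
              (norm_nonneg _)
        _ ≤ ε := hB.le
  obtain ⟨S, hS⟩ := cauchySeq_tendsto_of_complete hcauchy
  exact ⟨(1 / ((1 + 1) / (1 + q))) * S, hcoef.mul hS⟩
end

section
/- Let p be a fixed odd prime. For every continuous function f : ℤ_p → ℚ_p, the sequence N ↦ Σ_{x=0}^{p^N − 1} f(x)(−1)^x converges in ℚ_p as N → ∞, and its limit I_{−1}(f) satisfies I_{−1}(f(· + 1)) + I_{−1}(f) = 2 f(0). -/
open Filter Finset

private lemma sum_range_mul_aux {M : Type*} [AddCommMonoid M] (g : ℕ → M) (a b : ℕ) :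
    ∑ x ∈ Finset.range (a * b), g x
      = ∑ t ∈ Finset.range b, ∑ y ∈ Finset.range a, g (a * t + y) := by
  induction b with
  | zero => simp
  | succ b ih =>
      rw [Nat.mul_succ, Finset.sum_range_add, ih, Finset.sum_range_succ]

theorem stmt_2 (p : ℕ) [Fact p.Prime] (hp : Odd p)
    (f : C(ℤ_[p], ℚ_[p])) :
    ∃ I I₁ : ℚ_[p],
      Tendsto
        (fun N : ℕ => ∑ x ∈ Finset.range (p ^ N), f (x : ℤ_[p]) * (-1) ^ x)
        atTop (nhds I) ∧
      Tendsto
        (fun N : ℕ => ∑ x ∈ Finset.range (p ^ N), f ((x : ℤ_[p]) + 1) * (-1) ^ x)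
        atTop (nhds I₁) ∧
      I₁ + I = 2 * f 0 := by
  have hp1 : (1 : ℕ) < p := (Fact.out : p.Prime).one_lt
  set S : ℕ → ℚ_[p] := fun N => ∑ x ∈ Finset.range (p ^ N), f (x : ℤ_[p]) * (-1) ^ x with hS
  set T : ℕ → ℚ_[p] := fun N => ∑ x ∈ Finset.range (p ^ N), f ((x : ℤ_[p]) + 1) * (-1) ^ x
    with hT
  -- S is a Cauchy sequence
  have hcau : CauchySeq S := by
    rw [Metric.cauchySeq_iff']
    intro ε hε
    have huc : UniformContinuous f := CompactSpace.uniformContinuous_of_continuous f.continuous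
    rw [Metric.uniformContinuous_iff] at huc
    obtain ⟨δ, hδ, hδ'⟩ := huc (ε / 2) (half_pos hε)
    have hinv1 : ((p : ℝ)⁻¹) < 1 := by
      rw [inv_lt_one_iff₀]; right; exact_mod_cast hp1
    obtain ⟨N, hN⟩ := exists_pow_lt_of_lt_one hδ hinv1
    refine ⟨N, fun n hn => ?_⟩
    have hpn : p ^ n = p ^ N * p ^ (n - N) := by
      rw [← pow_add, Nat.add_sub_cancel' hn]
    -- rewrite S n as a double sum
    have hSn : S n = ∑ t ∈ Finset.range (p ^ (n - N)), ∑ y ∈ Finset.range (p ^ N),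
        f (((p ^ N * t + y : ℕ) : ℤ_[p])) * ((-1) ^ t * (-1) ^ y) := by
      rw [hS]
      simp only
      rw [hpn, sum_range_mul_aux (fun x => f (x : ℤ_[p]) * (-1) ^ x)]
      refine Finset.sum_congr rfl fun t _ => Finset.sum_congr rfl fun y _ => ?_
      congr 1
      rw [pow_add, pow_mul, (hp.pow).neg_one_pow]
    have hodd : ¬ Even (p ^ (n - N)) := by
      rw [Nat.not_even_iff_odd]; exact hp.pow
    have hSN : ∑ t ∈ Finset.range (p ^ (n - N)), ∑ y ∈ Finset.range (p ^ N),
        f ((y : ℤ_[p])) * ((-1 : ℚ_[p]) ^ t * (-1) ^ y) = S N := by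
      rw [hS]
      simp only
      rw [Finset.sum_comm]
      refine Finset.sum_congr rfl fun y _ => ?_
      have : ∀ t : ℕ, f ((y : ℤ_[p])) * ((-1 : ℚ_[p]) ^ t * (-1) ^ y)
          = (-1 : ℚ_[p]) ^ t * (f ((y : ℤ_[p])) * (-1) ^ y) := fun t => by ring
      rw [Finset.sum_congr rfl fun t _ => this t, ← Finset.sum_mul, neg_one_geom_sum,
        if_neg hodd, one_mul]
    have hdiff : S n - S N = ∑ t ∈ Finset.range (p ^ (n - N)), ∑ y ∈ Finset.range (p ^ N),
        (f (((p ^ N * t + y : ℕ) : ℤ_[p])) - f ((y : ℤ_[p]))) * ((-1) ^ t * (-1) ^ y) := by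
      rw [hSn, ← hSN, ← Finset.sum_sub_distrib]
      refine Finset.sum_congr rfl fun t _ => ?_
      rw [← Finset.sum_sub_distrib]
      exact Finset.sum_congr rfl fun y _ => (sub_mul _ _ _).symm
    rw [dist_eq_norm, hdiff]
    refine lt_of_le_of_lt ?_ (half_lt_self hε)
    refine IsUltrametricDist.norm_sum_le_of_forall_le_of_nonneg (le_of_lt (half_pos hε))
      fun t _ => ?_
    refine IsUltrametricDist.norm_sum_le_of_forall_le_of_nonneg (le_of_lt (half_pos hε))
      fun y _ => ?_
    rw [norm_mul]
    have hu : ‖((-1 : ℚ_[p]) ^ t * (-1) ^ y)‖ = 1 := by simp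
    rw [hu, mul_one]
    have hdist : dist (((p ^ N * t + y : ℕ) : ℤ_[p])) ((y : ℤ_[p])) < δ := by
      have hcast : ((p ^ N * t + y : ℕ) : ℤ_[p]) - (y : ℤ_[p])
          = (p : ℤ_[p]) ^ N * ((t : ℕ) : ℤ_[p]) := by push_cast; ring
      rw [dist_eq_norm, hcast]
      calc ‖(p : ℤ_[p]) ^ N * ((t : ℕ) : ℤ_[p])‖
          ≤ ‖(p : ℤ_[p]) ^ N‖ * ‖((t : ℕ) : ℤ_[p])‖ := norm_mul_le _ _
        _ ≤ ‖(p : ℤ_[p]) ^ N‖ * 1 :=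
            mul_le_mul_of_nonneg_left (PadicInt.norm_le_one _) (norm_nonneg _)
        _ = ((p : ℝ)⁻¹) ^ N := by
            rw [mul_one, PadicInt.norm_p_pow, zpow_neg, zpow_natCast, inv_pow]
        _ < δ := hN
    have := hδ' hdist
    rw [dist_eq_norm] at this
    exact this.le
  obtain ⟨I, hI⟩ := cauchySeq_tendsto_of_complete hcau
  -- the key identity T N + S N = f 0 + f (p^N)
  have hTS : ∀ N : ℕ, T N + S N = f 0 + f (((p ^ N : ℕ) : ℤ_[p])) := by
    intro N
    have htel := Finset.sum_range_sub' (fun x : ℕ => f (x : ℤ_[p]) * (-1 : ℚ_[p]) ^ x) (p ^ N)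
    have hterm : ∀ x : ℕ, (fun x : ℕ => f (x : ℤ_[p]) * (-1 : ℚ_[p]) ^ x) x
        - (fun x : ℕ => f (x : ℤ_[p]) * (-1 : ℚ_[p]) ^ x) (x + 1)
        = f ((x : ℤ_[p]) + 1) * (-1) ^ x + f (x : ℤ_[p]) * (-1) ^ x := by
      intro x
      simp only
      push_cast
      rw [pow_succ]
      ring
    rw [Finset.sum_congr rfl (fun x _ => hterm x), Finset.sum_add_distrib] at htel
    rw [hT, hS]
    simp only
    rw [htel]
    simp only [Nat.cast_zero, pow_zero, mul_one, (hp.pow).neg_one_pow]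
    ring
  -- the limit of the shifted sums
  have hfp : Tendsto (fun N : ℕ => f (((p ^ N : ℕ) : ℤ_[p]))) atTop (nhds (f 0)) := by
    have h1 : Tendsto (fun N : ℕ => ((p : ℤ_[p])) ^ N) atTop (nhds 0) := by
      refine tendsto_pow_atTop_nhds_zero_of_norm_lt_one ?_
      rw [PadicInt.norm_p]
      rw [inv_lt_one_iff₀]; right; exact_mod_cast hp1
    simp only [Nat.cast_pow]
    exact (f.continuous.tendsto 0).comp h1
  refine ⟨I, 2 * f 0 - I, hI, ?_, by ring⟩
  have hTfun : T = fun N : ℕ => f 0 + f (((p ^ N : ℕ) : ℤ_[p])) - S N := by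
    funext N
    exact eq_sub_of_add_eq (hTS N)
  rw [hTfun]
  have h3 : (2 : ℚ_[p]) * f 0 - I = f 0 + f 0 - I := by ring
  rw [h3]
  exact (tendsto_const_nhds.add hfp).sub hI
end

section
/- Let p be a fixed odd prime, let q ∈ ℚ_p satisfy ‖q − 1‖_p < 1, let d be an odd positive integer with gcd(d, p) = 1, and let a and N be nonnegative integers. Then μ_{−q} is a distribution on ℤ_p in the sense that (−q)^a/[d p^N]_{−q} = Σ_{i=0}^{p−1} (−q)^{a + i d p^N}/[d p^{N+1}]_{−q}, where all denominators are nonzero. -/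
open Finset

theorem stmt_3 (p : ℕ) [Fact p.Prime] (hp : Odd p)
    (q : ℚ_[p]) (hq : ‖q - 1‖ < 1)
    (d : ℕ) (hd : 0 < d) (hdodd : Odd d) (hdp : Nat.gcd d p = 1)
    (a N : ℕ) :
    (1 + q ^ (d * p ^ N)) / (1 + q) ≠ 0 ∧
    (1 + q ^ (d * p ^ (N + 1))) / (1 + q) ≠ 0 ∧
    (-q) ^ a / ((1 + q ^ (d * p ^ N)) / (1 + q)) =
      ∑ i ∈ Finset.range p,
        (-q) ^ (a + i * (d * p ^ N)) / ((1 + q ^ (d * p ^ (N + 1))) / (1 + q)) := by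
  have hppr : p.Prime := Fact.out
  have hqle : ‖q‖ ≤ 1 := by
    have h := Padic.nonarchimedean (q - 1) 1
    rw [sub_add_cancel] at h
    exact h.trans (max_le hq.le (by simp))
  have key : ∀ k : ℕ, ‖q ^ k - 1‖ < 1 := by
    intro k
    induction k with
    | zero => simpa using zero_lt_one
    | succ n ih =>
      have h1 : q ^ (n + 1) - 1 = q ^ n * (q - 1) + (q ^ n - 1) := by ring
      rw [h1]
      refine lt_of_le_of_lt (Padic.nonarchimedean _ _) (max_lt ?_ ih)
      calc ‖q ^ n * (q - 1)‖ = ‖q ^ n‖ * ‖q - 1‖ := norm_mul _ _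
        _ ≤ 1 * ‖q - 1‖ := by
            gcongr
            rw [norm_pow]
            exact pow_le_one₀ (norm_nonneg q) hqle
        _ < 1 := by rw [one_mul]; exact hq
  have h2 : ‖(2 : ℚ_[p])‖ = 1 := by
    have hle : ‖((2 : ℤ) : ℚ_[p])‖ ≤ 1 := Padic.norm_int_le_one 2
    have hne : ¬ ‖((2 : ℤ) : ℚ_[p])‖ < 1 := by
      rw [Padic.norm_intCast_lt_one_iff]
      intro hdvd
      have hp2 : p ∣ 2 := by exact_mod_cast hdvd
      have hpe : p = 2 := (Nat.prime_dvd_prime_iff_eq hppr Nat.prime_two).mp hp2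
      rw [hpe, Nat.odd_iff] at hp
      omega
    have hc : ((2 : ℤ) : ℚ_[p]) = 2 := by norm_cast
    rw [hc] at hle hne
    exact le_antisymm hle (not_lt.mp hne)
  have hne0 : ∀ k : ℕ, (1 : ℚ_[p]) + q ^ k ≠ 0 := by
    intro k h0
    have hqk : q ^ k - 1 = -2 := by linear_combination h0
    have := key k
    rw [hqk, norm_neg, h2] at this
    exact lt_irrefl 1 this
  have h1q : (1 : ℚ_[p]) + q ≠ 0 := by simpa using hne0 1
  have hA := hne0 (d * p ^ N)
  have hB := hne0 (d * p ^ (N + 1))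
  refine ⟨div_ne_zero hA h1q, div_ne_zero hB h1q, ?_⟩
  have hmodd : Odd (d * p ^ N) := hdodd.mul (hp.pow)
  set x : ℚ_[p] := -(q ^ (d * p ^ N)) with hx
  have hxne : x ≠ 1 := by
    intro h
    apply hA
    have : (1 : ℚ_[p]) + q ^ (d * p ^ N) = 1 - x := by rw [hx]; ring
    rw [this, h, sub_self]
  have hx1 : x - 1 ≠ 0 := sub_ne_zero.mpr hxne
  have hxp : x ^ p = -(q ^ (d * p ^ (N + 1))) := by
    rw [hx, hp.neg_pow, ← pow_mul, mul_assoc, ← pow_succ]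
  have hsum : ∑ i ∈ Finset.range p, x ^ i
      = (1 + q ^ (d * p ^ (N + 1))) / (1 + q ^ (d * p ^ N)) := by
    rw [geom_sum_eq hxne p, hxp, div_eq_div_iff hx1 hA, hx]
    ring
  have hterm : ∀ i, (-q) ^ (a + i * (d * p ^ N)) = (-q) ^ a * x ^ i := by
    intro i
    rw [pow_add, mul_comm i, pow_mul, hmodd.neg_pow, hx]
  simp only [hterm]
  rw [div_div_eq_mul_div, ← Finset.sum_div, ← Finset.mul_sum, hsum]
  field_simp
end

section
/- Let p be a fixed odd prime and let q ∈ ℚ_p satisfy ‖q − 1‖_p < 1. For every continuous function f : ℤ_p → ℚ_p, with f_1 denoting the translated function f_1(x) = f(x + 1), the fermionic p-adic q-integral satisfies q · I_{−q}(f_1) + I_{−q}(f) = [2]_q · f(0), where [2]_q = 1 + q. Concretely: q · lim_{N→∞} (1/[p^N]_{−q}) Σ_{x=0}^{p^N − 1} f(x+1)(−q)^x + lim_{N→∞} (1/[p^N]_{−q}) Σ_{x=0}^{p^N − 1} f(x)(−q)^x = (1 + q) f(0), both limits existing. -/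
open Filter Finset

section FermAux
variable {p : ℕ} [hF : Fact p.Prime]

private lemma ferm_norm_le_inv (x : ℚ_[p]) (h : ‖x‖ < 1) : ‖x‖ ≤ (p:ℝ)⁻¹ := by
  have := (Padic.norm_le_pow_iff_norm_lt_pow_add_one x (-1)).2
  simp at this
  exact this h

private lemma ferm_norm_two (hp : Odd p) : ‖(2 : ℚ_[p])‖ = 1 := by
  have h1 : ‖((2:ℤ) : ℚ_[p])‖ ≤ 1 := Padic.norm_int_le_one 2
  have h2 : ¬ ‖((2:ℤ) : ℚ_[p])‖ < 1 := by
    rw [Padic.norm_intCast_lt_one_iff]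
    intro h
    have h2 : (p:ℤ) ≤ 2 := Int.le_of_dvd (by norm_num) h
    have h3 : 2 ≤ p := hF.out.two_le
    have : p = 2 := by omega
    rw [this] at hp; simp [Nat.odd_iff] at hp
  push_cast at h1 h2
  linarith

private lemma ferm_norm_two_add (hp : Odd p) (t : ℚ_[p]) (ht : ‖t‖ < 1) : ‖2 + t‖ = 1 := by
  have h2 : ‖(2:ℚ_[p])‖ = 1 := ferm_norm_two hp
  have hlt : ‖t‖ < ‖(2:ℚ_[p])‖ := by rw [h2]; exact ht
  rw [Padic.add_eq_max_of_ne (ne_of_gt hlt), h2]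
  exact max_eq_left (h2 ▸ hlt.le)

private lemma ferm_norm_q (q : ℚ_[p]) (hq : ‖q - 1‖ < 1) : ‖q‖ = 1 := by
  have : q = 1 + (q - 1) := by ring
  have hlt : ‖q - 1‖ < ‖(1:ℚ_[p])‖ := by simpa using hq
  rw [this, Padic.add_eq_max_of_ne (ne_of_gt hlt)]
  simp [max_eq_left (le_of_lt (by simpa using hq))]

private lemma ferm_geom_norm_le (q : ℚ_[p]) (hq : ‖q‖ ≤ 1) (n : ℕ) :
    ‖∑ i ∈ range n, q ^ i‖ ≤ 1 := by
  apply IsUltrametricDist.norm_sum_le_of_forall_le_of_nonneg zero_le_one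
  intro i _
  calc ‖q ^ i‖ = ‖q‖ ^ i := by rw [norm_pow]
  _ ≤ 1 := pow_le_one₀ (norm_nonneg q) hq

private lemma ferm_pow_sub_one (q : ℚ_[p]) (hq : ‖q‖ ≤ 1) (n : ℕ) :
    ‖q ^ n - 1‖ ≤ ‖q - 1‖ := by
  rw [← geom_sum_mul, norm_mul]
  calc ‖∑ i ∈ range n, q ^ i‖ * ‖q - 1‖ ≤ 1 * ‖q - 1‖ := by
        gcongr; exact ferm_geom_norm_le q hq n
  _ = ‖q - 1‖ := one_mul _

private lemma ferm_frob (r : ℚ_[p]) (hr : ‖r - 1‖ < 1) :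
    ‖r ^ p - 1‖ ≤ (p:ℝ)⁻¹ * ‖r - 1‖ := by
  have hp2 : 2 ≤ p := hF.out.two_le
  have hle : ‖r - 1‖ ≤ (p:ℝ)⁻¹ := ferm_norm_le_inv _ hr
  set t := r - 1 with htdef
  have hr' : r = 1 + t := by ring
  have hexp : r ^ p - 1 = ∑ k ∈ Ico 1 (p+1), t ^ k * (p.choose k : ℚ_[p]) := by
    rw [hr', add_comm, add_pow]
    simp only [one_pow, mul_one]
    rw [range_eq_Ico, Finset.sum_eq_sum_Ico_succ_bot (by omega)]
    simp
  rw [hexp]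
  have hnn : (0:ℝ) ≤ (p:ℝ)⁻¹ * ‖t‖ := by positivity
  apply IsUltrametricDist.norm_sum_le_of_forall_le_of_nonneg hnn
  intro k hk
  simp only [Finset.mem_Ico] at hk
  rw [norm_mul, norm_pow]
  rcases eq_or_lt_of_le (Nat.lt_succ_iff.mp hk.2) with hkp | hkp
  · have hc : ‖(↑(p.choose k) : ℚ_[p])‖ ≤ 1 := by
      exact_mod_cast Padic.norm_int_le_one (p.choose k : ℤ)
    calc ‖t‖ ^ k * ‖(↑(p.choose k) : ℚ_[p])‖ ≤ ‖t‖ ^ k * 1 := by gcongr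
    _ = ‖t‖ ^ k := mul_one _
    _ ≤ ‖t‖ ^ 2 := pow_le_pow_of_le_one (norm_nonneg t) hr.le (by omega)
    _ = ‖t‖ * ‖t‖ := sq ‖t‖
    _ ≤ (p:ℝ)⁻¹ * ‖t‖ := by gcongr
  · have hdvd : (p:ℤ) ∣ (p.choose k : ℤ) := by
      exact_mod_cast hF.out.dvd_choose_self (by omega) hkp
    obtain ⟨m, hm⟩ := hdvd
    have hc : ‖(↑(p.choose k) : ℚ_[p])‖ ≤ (p:ℝ)⁻¹ := by
      have : ((p.choose k : ℤ) : ℚ_[p]) = (p:ℚ_[p]) * (m : ℚ_[p]) := by exact_mod_cast hm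
      push_cast at this
      rw [this, norm_mul, Padic.norm_p]
      calc (p:ℝ)⁻¹ * ‖(m:ℚ_[p])‖ ≤ (p:ℝ)⁻¹ * 1 := by
            gcongr; exact Padic.norm_int_le_one m
      _ = (p:ℝ)⁻¹ := mul_one _
    calc ‖t‖ ^ k * ‖(↑(p.choose k) : ℚ_[p])‖ ≤ ‖t‖ ^ 1 * (p:ℝ)⁻¹ := by
          apply mul_le_mul (pow_le_pow_of_le_one (norm_nonneg t) hr.le hk.1) hc
            (norm_nonneg _) (by positivity)
    _ = (p:ℝ)⁻¹ * ‖t‖ := by rw [pow_one]; ring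

private lemma ferm_sum_decomp {M : Type*} [AddCommMonoid M] (f : ℕ → M) (m n : ℕ) (hm : 0 < m) :
    ∑ x ∈ range (m * n), f x = ∑ i ∈ range m, ∑ j ∈ range n, f (i + m * j) := by
  rw [← Finset.sum_product']
  apply Finset.sum_nbij' (fun x => (x % m, x / m)) (fun y => y.1 + m * y.2)
  · intro a ha
    simp only [mem_range] at ha
    simp only [Finset.mem_product, mem_range]
    exact ⟨Nat.mod_lt _ hm, Nat.div_lt_of_lt_mul (by omega)⟩
  · intro a ha
    simp only [Finset.mem_product, mem_range] at ha
    simp only [mem_range]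
    calc a.1 + m * a.2 < m + m * a.2 := by omega
    _ ≤ m * n := by
        have : a.2 + 1 ≤ n := ha.2
        calc m + m * a.2 = m * (a.2 + 1) := by ring
        _ ≤ m * n := Nat.mul_le_mul_left m this
  · intro a _
    simp [Nat.mod_add_div]
  · intro a ha
    simp only [Finset.mem_product, mem_range] at ha
    simp [Nat.add_mul_mod_self_left, Nat.mod_eq_of_lt ha.1, Nat.add_mul_div_left _ _ hm,
      Nat.div_eq_of_lt ha.1]
  · intro a _
    simp [Nat.mod_add_div]

variable (q : ℚ_[p]) (g : C(ℤ_[p], ℚ_[p]))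

private lemma ferm_one_add_qpow_norm (hp : Odd p) (hq : ‖q - 1‖ < 1) (n : ℕ) :
    ‖1 + q ^ n‖ = 1 := by
  have h1 : ‖q‖ = 1 := ferm_norm_q q hq
  have h2 : ‖q ^ n - 1‖ < 1 := lt_of_le_of_lt (ferm_pow_sub_one q h1.le n) hq
  have : 1 + q ^ n = 2 + (q ^ n - 1) := by ring
  rw [this]; exact ferm_norm_two_add hp _ h2

private lemma ferm_one_add_qpow_ne (hp : Odd p) (hq : ‖q - 1‖ < 1) (n : ℕ) :
    1 + q ^ n ≠ 0 := by
  intro h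
  have := ferm_one_add_qpow_norm q hp hq n
  rw [h] at this; simp at this

noncomputable def fermS (N : ℕ) : ℚ_[p] := ∑ x ∈ range (p ^ N), g (x : ℤ_[p]) * (-q) ^ x
noncomputable def fermA (N : ℕ) : ℚ_[p] := (1 + q) / (1 + q ^ (p ^ N)) * fermS q g N

private lemma fermA_diff (hp : Odd p) (hq : ‖q - 1‖ < 1) (N : ℕ) :
    fermA q g (N+1) - fermA q g N =
      (1 + q) / (1 + q ^ (p ^ (N+1))) *
        ∑ i ∈ range (p ^ N), ∑ j ∈ range p,
          (g (((i + p ^ N * j : ℕ) : ℤ_[p])) - g (i : ℤ_[p])) * (-q) ^ (i + p ^ N * j) := by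
  have hpn : (0:ℕ) < p ^ N := pow_pos hF.out.pos N
  have hq1 : ‖q‖ = 1 := ferm_norm_q q hq
  have hne : ∀ n, 1 + q ^ n ≠ 0 := ferm_one_add_qpow_ne q hp hq
  have hodd : Odd (p ^ N) := hp.pow
  have hx1 : (-q) ^ (p ^ N) = -(q ^ (p ^ N)) := hodd.neg_pow q
  have hxne : (-q) ^ (p ^ N) ≠ 1 := by
    rw [hx1]
    intro h
    apply hne (p ^ N)
    have : q ^ (p ^ N) = -1 := by linear_combination -h
    rw [this]; ring
  have hG : ∑ j ∈ range p, ((-q) ^ (p ^ N)) ^ j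
      = (1 + q ^ (p ^ (N+1))) / (1 + q ^ (p ^ N)) := by
    rw [geom_sum_eq hxne]
    have h2 : ((-q) ^ (p ^ N)) ^ p = -(q ^ (p ^ (N+1))) := by
      rw [← pow_mul, ← pow_succ, (hp.pow : Odd (p ^ (N+1))).neg_pow]
    rw [h2, hx1]
    rw [div_eq_div_iff (by intro h; apply hne (p^N); linear_combination -h) (hne _)]
    ring
  have hS : fermS q g (N+1)
      = ∑ i ∈ range (p ^ N), ∑ j ∈ range p,
          g (((i + p ^ N * j : ℕ) : ℤ_[p])) * (-q) ^ (i + p ^ N * j) := by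
    unfold fermS
    rw [pow_succ, ferm_sum_decomp _ _ _ hpn]
  have hmain : ∑ i ∈ range (p ^ N), ∑ j ∈ range p,
        g (i : ℤ_[p]) * (-q) ^ (i + p ^ N * j)
      = fermS q g N * ((1 + q ^ (p ^ (N+1))) / (1 + q ^ (p ^ N))) := by
    rw [← hG]
    unfold fermS
    rw [sum_mul]
    apply Finset.sum_congr rfl
    intro i _
    rw [mul_sum]
    apply Finset.sum_congr rfl
    intro j _
    rw [pow_add, pow_mul]
    ring
  have hsub : ∑ i ∈ range (p ^ N), ∑ j ∈ range p,
        (g (((i + p ^ N * j : ℕ) : ℤ_[p])) - g (i : ℤ_[p])) * (-q) ^ (i + p ^ N * j)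
      = fermS q g (N+1) - fermS q g N * ((1 + q ^ (p ^ (N+1))) / (1 + q ^ (p ^ N))) := by
    rw [hS, ← hmain, ← Finset.sum_sub_distrib]
    apply Finset.sum_congr rfl
    intro i _
    rw [← Finset.sum_sub_distrib]
    apply Finset.sum_congr rfl
    intro j _
    ring
  have hc : (1 + q) / (1 + q ^ (p ^ (N+1))) * ((1 + q ^ (p ^ (N+1))) / (1 + q ^ (p ^ N)))
      = (1 + q) / (1 + q ^ (p ^ N)) := by
    field_simp
    rw [mul_comm (1 + q ^ p ^ (N+1)) (1 + q ^ p ^ N), mul_div_mul_right _ _ (hne _)]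
  rw [hsub, mul_sub]
  unfold fermA
  congr 1
  calc (1 + q) / (1 + q ^ p ^ N) * fermS q g N
      = ((1 + q) / (1 + q ^ (p ^ (N+1))) * ((1 + q ^ (p ^ (N+1))) / (1 + q ^ (p ^ N)))) *
          fermS q g N := by
        rw [hc]
  _ = (1 + q) / (1 + q ^ p ^ (N + 1)) *
        (fermS q g N * ((1 + q ^ p ^ (N + 1)) / (1 + q ^ p ^ N))) := by
        ring

private lemma fermA_diff_norm_le (hp : Odd p) (hq : ‖q - 1‖ < 1) (N : ℕ) {ε : ℝ} (hε : 0 ≤ ε)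
    (h : ∀ a b : ℤ_[p], ‖a - b‖ ≤ ((p:ℝ)⁻¹) ^ N → ‖g a - g b‖ ≤ ε) :
    ‖fermA q g (N+1) - fermA q g N‖ ≤ ε := by
  rw [fermA_diff q g hp hq N, norm_mul]
  have hc : ‖(1 + q) / (1 + q ^ (p ^ (N+1)))‖ = 1 := by
    rw [norm_div]
    have h1 : ‖1 + q‖ = 1 := by
      have := ferm_one_add_qpow_norm q hp hq 1; rwa [pow_one] at this
    rw [h1, ferm_one_add_qpow_norm q hp hq]
    norm_num
  rw [hc, one_mul]
  apply IsUltrametricDist.norm_sum_le_of_forall_le_of_nonneg hε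
  intro i _
  apply IsUltrametricDist.norm_sum_le_of_forall_le_of_nonneg hε
  intro j _
  have hq1 : ‖q‖ = 1 := ferm_norm_q q hq
  rw [norm_mul, norm_pow, norm_neg, hq1, one_pow, mul_one]
  apply h
  have hcast : ((i + p ^ N * j : ℕ) : ℤ_[p]) - (i : ℤ_[p]) = (p : ℤ_[p]) ^ N * (j : ℤ_[p]) := by
    push_cast; ring
  rw [hcast]
  calc ‖(p : ℤ_[p]) ^ N * (j : ℤ_[p])‖ ≤ ‖(p : ℤ_[p]) ^ N‖ * ‖(j : ℤ_[p])‖ := norm_mul_le _ _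
  _ ≤ ‖(p : ℤ_[p]) ^ N‖ * 1 := by gcongr; exact PadicInt.norm_le_one _
  _ = ((p:ℝ)⁻¹) ^ N := by
      rw [mul_one, PadicInt.norm_p_pow, zpow_neg, inv_pow, zpow_natCast]

private lemma fermA_conv (hp : Odd p) (hq : ‖q - 1‖ < 1) :
    ∃ L, Tendsto (fermA q g) atTop (nhds L) := by
  have hp1 : (1:ℝ) < p := by exact_mod_cast hF.out.one_lt
  have hinv0 : (0:ℝ) < (p:ℝ)⁻¹ := by positivity
  have hinv1 : (p:ℝ)⁻¹ < 1 := by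
    rw [inv_lt_one_iff₀]; right; exact hp1
  have hucont : UniformContinuous g := CompactSpace.uniformContinuous_of_continuous g.continuous
  rw [Metric.uniformContinuous_iff] at hucont
  suffices hC : CauchySeq (fermA q g) from cauchySeq_tendsto_of_complete hC
  rw [Metric.cauchySeq_iff']
  intro ε hε
  obtain ⟨δ, hδ, hδ'⟩ := hucont (ε/2) (by positivity)
  obtain ⟨N₀, hN₀⟩ := exists_pow_lt_of_lt_one hδ hinv1
  refine ⟨N₀, fun n hn => ?_⟩
  rw [dist_eq_norm]
  have htel : fermA q g n - fermA q g N₀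
      = ∑ k ∈ Ico N₀ n, (fermA q g (k+1) - fermA q g k) := by
    rw [Finset.sum_Ico_eq_sub _ hn, Finset.sum_range_sub, Finset.sum_range_sub]
    ring
  rw [htel]
  have hb : ‖∑ k ∈ Ico N₀ n, (fermA q g (k+1) - fermA q g k)‖ ≤ ε/2 := by
    apply IsUltrametricDist.norm_sum_le_of_forall_le_of_nonneg (by positivity)
    intro k hk
    apply fermA_diff_norm_le q g hp hq k (by positivity)
    intro a b hab
    have hk0 : N₀ ≤ k := (Finset.mem_Ico.mp hk).1
    have hlt : ‖a - b‖ < δ := by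
      calc ‖a - b‖ ≤ ((p:ℝ)⁻¹) ^ k := hab
      _ ≤ ((p:ℝ)⁻¹) ^ N₀ := pow_le_pow_of_le_one hinv0.le hinv1.le hk0
      _ < δ := hN₀
    have := hδ' (by rwa [dist_eq_norm] : dist a b < δ)
    rw [dist_eq_norm] at this
    exact this.le
  linarith

private lemma ferm_qpow_tendsto (hq : ‖q - 1‖ < 1) :
    Tendsto (fun N : ℕ => q ^ (p ^ N)) atTop (nhds 1) := by
  have hp1 : (1:ℝ) < p := by exact_mod_cast hF.out.one_lt
  have hinv0 : (0:ℝ) < (p:ℝ)⁻¹ := by positivity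
  have hinv1 : (p:ℝ)⁻¹ < 1 := by rw [inv_lt_one_iff₀]; right; exact hp1
  have hbound : ∀ N : ℕ, ‖q ^ (p ^ N) - 1‖ ≤ ((p:ℝ)⁻¹) ^ N * ‖q - 1‖ := by
    intro N
    induction N with
    | zero => simp
    | succ N ih =>
      have hlt1 : ‖q ^ (p ^ N) - 1‖ < 1 := by
        apply lt_of_le_of_lt ih
        calc ((p:ℝ)⁻¹) ^ N * ‖q - 1‖ ≤ 1 * ‖q - 1‖ := by
              gcongr; exact pow_le_one₀ hinv0.le hinv1.le
        _ < 1 := by rwa [one_mul]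
      have hstep := ferm_frob (q ^ (p ^ N)) hlt1
      rw [← pow_mul, ← pow_succ] at hstep
      calc ‖q ^ (p ^ (N+1)) - 1‖ ≤ (p:ℝ)⁻¹ * ‖q ^ (p ^ N) - 1‖ := hstep
      _ ≤ (p:ℝ)⁻¹ * (((p:ℝ)⁻¹) ^ N * ‖q - 1‖) := by gcongr
      _ = ((p:ℝ)⁻¹) ^ (N+1) * ‖q - 1‖ := by ring
  rw [tendsto_iff_norm_sub_tendsto_zero]
  apply squeeze_zero (fun N => norm_nonneg _) hbound
  have := (tendsto_pow_atTop_nhds_zero_of_lt_one hinv0.le hinv1).mul_const ‖q - 1‖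
  simpa using this

private lemma ferm_pn_tendsto :
    Tendsto (fun N : ℕ => ((p ^ N : ℕ) : ℤ_[p])) atTop (nhds 0) := by
  have hp1 : (1:ℝ) < p := by exact_mod_cast hF.out.one_lt
  have hinv0 : (0:ℝ) < (p:ℝ)⁻¹ := by positivity
  have hinv1 : (p:ℝ)⁻¹ < 1 := by rw [inv_lt_one_iff₀]; right; exact hp1
  rw [tendsto_iff_norm_sub_tendsto_zero]
  apply squeeze_zero (fun N => norm_nonneg _) (fun N => ?_)
    (tendsto_pow_atTop_nhds_zero_of_lt_one hinv0.le hinv1)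
  have : ((p ^ N : ℕ) : ℤ_[p]) - 0 = (p : ℤ_[p]) ^ N := by push_cast; ring
  rw [this, PadicInt.norm_p_pow, zpow_neg, inv_pow, zpow_natCast]

private lemma ferm_sum_id (hp : Odd p) (N : ℕ) :
    q * (∑ x ∈ range (p ^ N), g ((x : ℤ_[p]) + 1) * (-q) ^ x)
      + ∑ x ∈ range (p ^ N), g (x : ℤ_[p]) * (-q) ^ x
    = g 0 + q ^ (p ^ N) * g ((p ^ N : ℕ) : ℤ_[p]) := by
  set h : ℕ → ℚ_[p] := fun y => g (y : ℤ_[p]) * (-q) ^ y with hdef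
  have h1 : ∀ x : ℕ, q * (g ((x : ℤ_[p]) + 1) * (-q) ^ x) = -(h (x+1)) := by
    intro x
    simp only [hdef]
    push_cast
    rw [pow_succ]
    ring
  have h2 : q * (∑ x ∈ range (p ^ N), g ((x : ℤ_[p]) + 1) * (-q) ^ x)
      = -∑ x ∈ range (p ^ N), h (x+1) := by
    rw [Finset.mul_sum, ← Finset.sum_neg_distrib]
    exact Finset.sum_congr rfl fun x _ => h1 x
  rw [h2]
  have h3 : -∑ x ∈ range (p ^ N), h (x+1) + ∑ x ∈ range (p ^ N), h x
      = ∑ x ∈ range (p ^ N), (h x - h (x+1)) := by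
    rw [Finset.sum_sub_distrib]; ring
  have h4 : ∑ x ∈ range (p ^ N), h x
      = ∑ x ∈ range (p ^ N), g (x : ℤ_[p]) * (-q) ^ x := rfl
  rw [← h4, h3, Finset.sum_range_sub' h]
  have h5 : h 0 = g 0 := by simp [hdef]
  have h6 : h (p ^ N) = -(q ^ (p ^ N) * g ((p ^ N : ℕ) : ℤ_[p])) := by
    simp only [hdef]
    rw [(hp.pow : Odd (p ^ N)).neg_pow]
    ring
  rw [h5, h6]
  ring

end FermAux

theorem stmt_4 (p : ℕ) [Fact p.Prime] (hp : Odd p)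
    (q : ℚ_[p]) (hq : ‖q - 1‖ < 1)
    (f : C(ℤ_[p], ℚ_[p])) :
    ∃ I I₁ : ℚ_[p],
      Tendsto
        (fun N : ℕ =>
          (1 / ((1 + q ^ p ^ N) / (1 + q))) *
            ∑ x ∈ Finset.range (p ^ N), f ((x : ℤ_[p]) + 1) * (-q) ^ x)
        atTop (nhds I₁) ∧
      Tendsto
        (fun N : ℕ =>
          (1 / ((1 + q ^ p ^ N) / (1 + q))) *
            ∑ x ∈ Finset.range (p ^ N), f (x : ℤ_[p]) * (-q) ^ x)
        atTop (nhds I) ∧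
      q * I₁ + I = (1 + q) * f 0 := by
  classical
  set f₁ : C(ℤ_[p], ℚ_[p]) := f.comp ⟨fun x => x + 1, by continuity⟩ with hf₁
  have hf₁app : ∀ x : ℤ_[p], f₁ x = f (x + 1) := fun x => rfl
  obtain ⟨I, hI⟩ := fermA_conv q f hp hq
  obtain ⟨I₁, hI₁⟩ := fermA_conv q f₁ hp hq
  have hfun : (fun N : ℕ =>
      (1 / ((1 + q ^ p ^ N) / (1 + q))) *
        ∑ x ∈ Finset.range (p ^ N), f (x : ℤ_[p]) * (-q) ^ x) = fermA q f := by
    funext N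
    unfold fermA fermS
    rw [one_div_div]
  have hfun₁ : (fun N : ℕ =>
      (1 / ((1 + q ^ p ^ N) / (1 + q))) *
        ∑ x ∈ Finset.range (p ^ N), f ((x : ℤ_[p]) + 1) * (-q) ^ x) = fermA q f₁ := by
    funext N
    unfold fermA fermS
    rw [one_div_div]
    congr 1
  refine ⟨I, I₁, ?_, ?_, ?_⟩
  · rw [hfun₁]; exact hI₁
  · rw [hfun]; exact hI
  · have hcomb : ∀ N : ℕ, q * fermA q f₁ N + fermA q f N
        = (1 + q) / (1 + q ^ (p ^ N)) * (f 0 + q ^ (p ^ N) * f ((p ^ N : ℕ) : ℤ_[p])) := by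
      intro N
      have hid := ferm_sum_id q f hp N
      have hstep : q * fermA q f₁ N + fermA q f N
          = (1 + q) / (1 + q ^ (p ^ N)) *
            (q * fermS q f₁ N + fermS q f N) := by
        unfold fermA; ring
      rw [hstep]
      congr 1
    have htend1 : Tendsto (fun N : ℕ => q * fermA q f₁ N + fermA q f N) atTop
        (nhds (q * I₁ + I)) := (hI₁.const_mul q).add hI
    have h2ne : (1 + 1 : ℚ_[p]) ≠ 0 := by
      intro h
      have h2 : (2 : ℚ_[p]) = 0 := by linear_combination h
      exact two_ne_zero h2
    have htend2 : Tendsto (fun N : ℕ =>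
        (1 + q) / (1 + q ^ (p ^ N)) * (f 0 + q ^ (p ^ N) * f ((p ^ N : ℕ) : ℤ_[p]))) atTop
        (nhds ((1 + q) / (1 + 1) * (f 0 + 1 * f 0))) := by
      apply Tendsto.mul
      · exact tendsto_const_nhds.div (tendsto_const_nhds.add (ferm_qpow_tendsto q hq)) h2ne
      · exact tendsto_const_nhds.add
          ((ferm_qpow_tendsto q hq).mul ((f.continuous.tendsto 0).comp ferm_pn_tendsto))
    have hfinal := tendsto_nhds_unique (htend1.congr fun N => hcomb N) htend2
    rw [hfinal]
    field_simp
end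

section
/- Let p be a fixed odd prime and let q ∈ ℚ_p satisfy ‖q − 1‖_p < 1 and q ≠ 1. For every nonnegative integer m and every natural number x, the q-Euler polynomial E_{m,q}(x), defined as the fermionic p-adic q-integral of y ↦ [x + y]_q^m, admits the closed form: lim_{N→∞} (1/[p^N]_{−q}) Σ_{y=0}^{p^N − 1} [x + y]_q^m (−q)^y = [2]_q · (1/(1 − q))^m · Σ_{i=0}^{m} C(m, i) (−1)^i q^{i x}/(1 + q^{i+1}), where all denominators 1 + q^{i+1} are nonzero. -/
open Filter Finset

section Aux
variable {p : ℕ} [Fact p.Prime]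

lemma aux_pow_sub_one (a : ℚ_[p]) (ha : ‖a‖ ≤ 1) : ∀ k : ℕ, ‖a ^ k - 1‖ ≤ ‖a - 1‖ := by
  intro k
  induction k with
  | zero => simp
  | succ k ih =>
    have h1 : a ^ (k + 1) - 1 = a ^ k * (a - 1) + (a ^ k - 1) := by ring
    rw [h1]
    refine (Padic.nonarchimedean _ _).trans (max_le ?_ ih)
    rw [norm_mul]
    calc ‖a ^ k‖ * ‖a - 1‖ ≤ 1 * ‖a - 1‖ := by
          gcongr; exact (norm_pow a k ▸ pow_le_one₀ (norm_nonneg a) ha)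
      _ = ‖a - 1‖ := one_mul _

lemma aux_tendsto (p : ℕ) [Fact p.Prime] (q : ℚ_[p]) (hq : ‖q - 1‖ < 1) :
    Tendsto (fun N : ℕ => q ^ p ^ N) atTop (nhds 1) := by
  have hq1 : ‖q‖ ≤ 1 := by
    calc ‖q‖ = ‖(q - 1) + 1‖ := by ring_nf
      _ ≤ max ‖q - 1‖ ‖(1:ℚ_[p])‖ := Padic.nonarchimedean _ _
      _ ≤ 1 := max_le hq.le (by simp)
  set c : ℝ := ‖q - 1‖ with hc
  set r : ℝ := max c ‖(p : ℚ_[p])‖ with hr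
  have hr1 : r < 1 := by
    apply max_lt hq
    rw [Padic.norm_p]
    have : (1:ℝ) < p := by exact_mod_cast (Fact.out : p.Prime).one_lt
    rw [inv_lt_one_iff₀]; right; exact this
  have hr0 : 0 ≤ r := le_max_of_le_left (norm_nonneg _)
  -- key step
  have key : ∀ a : ℚ_[p], ‖a‖ ≤ 1 → ‖a - 1‖ ≤ c → ‖a ^ p - 1‖ ≤ r * ‖a - 1‖ := by
    intro a ha hac
    have hgs : a ^ p - 1 = (∑ j ∈ range p, a ^ j) * (a - 1) := (geom_sum_mul a p).symm
    rw [hgs, norm_mul]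
    gcongr
    have hsum : (∑ j ∈ range p, a ^ j) = (∑ j ∈ range p, (a ^ j - 1)) + (p : ℚ_[p]) := by
      rw [Finset.sum_sub_distrib]
      simp
    rw [hsum]
    refine (Padic.nonarchimedean _ _).trans (max_le ?_ (le_max_right _ _))
    refine le_max_of_le_left ?_
    refine IsUltrametricDist.norm_sum_le_of_forall_le_of_nonneg ?_ ?_
    · exact (norm_nonneg _).trans hac
    · intro j _
      exact (aux_pow_sub_one a ha j).trans hac
  have main : ∀ N : ℕ, ‖q ^ p ^ N - 1‖ ≤ c * r ^ N := by
    intro N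
    induction N with
    | zero => simp [hc]
    | succ N ih =>
      have hle : ‖q ^ p ^ N - 1‖ ≤ c := by
        refine ih.trans ?_
        calc c * r ^ N ≤ c * 1 :=
              mul_le_mul_of_nonneg_left (pow_le_one₀ hr0 hr1.le) (norm_nonneg _)
          _ = c := mul_one _
      have hnorm : ‖q ^ p ^ N‖ ≤ 1 := by
        rw [norm_pow]; exact pow_le_one₀ (norm_nonneg _) hq1
      have := key (q ^ p ^ N) hnorm hle
      rw [← pow_mul, ← pow_succ] at this
      calc ‖q ^ p ^ (N + 1) - 1‖ ≤ r * ‖q ^ p ^ N - 1‖ := this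
        _ ≤ r * (c * r ^ N) := by gcongr
        _ = c * r ^ (N + 1) := by ring
  rw [tendsto_iff_norm_sub_tendsto_zero]
  refine squeeze_zero (fun N => norm_nonneg _) main ?_
  have : Tendsto (fun N : ℕ => c * r ^ N) atTop (nhds (c * 0)) :=
    (tendsto_pow_atTop_nhds_zero_of_lt_one hr0 hr1).const_mul c
  simpa using this

lemma aux_ne (p : ℕ) [Fact p.Prime] (hp : Odd p) (q : ℚ_[p]) (hq : ‖q - 1‖ < 1)
    (k : ℕ) : (1 : ℚ_[p]) + q ^ k ≠ 0 := by
  have hq1 : ‖q‖ ≤ 1 := by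
    calc ‖q‖ = ‖(q - 1) + 1‖ := by ring_nf
      _ ≤ max ‖q - 1‖ ‖(1:ℚ_[p])‖ := Padic.nonarchimedean _ _
      _ ≤ 1 := max_le hq.le (by simp)
  intro h
  have h2 : q ^ k = -1 := by linear_combination h
  have h3 : ‖q ^ k - 1‖ = ‖(2 : ℚ_[p])‖ := by
    rw [h2]; norm_num
  have h4 : ‖q ^ k - 1‖ < 1 := lt_of_le_of_lt (aux_pow_sub_one q hq1 k) hq
  have h5 : ‖(2 : ℚ_[p])‖ = 1 := by
    have hnd : ¬ ((p : ℤ) ∣ 2) := by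
      intro hdvd
      have hdn : p ∣ 2 := by exact_mod_cast hdvd
      have hp2 : p = 2 := (Nat.prime_dvd_prime_iff_eq Fact.out Nat.prime_two).mp hdn
      subst hp2
      revert hp; decide
    have := (Padic.norm_intCast_lt_one_iff (k := 2)).not.mpr hnd
    push_cast at this
    have hle : ‖(2 : ℚ_[p])‖ ≤ 1 := by
      have := Padic.norm_int_le_one (p := p) 2
      push_cast at this
      exact this
    linarith [lt_or_eq_of_le hle]
  rw [h3, h5] at h4
  linarith

end Aux

theorem stmt_5 (p : ℕ) [Fact p.Prime] (hp : Odd p)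
    (q : ℚ_[p]) (hq : ‖q - 1‖ < 1) (hq1 : q ≠ 1)
    (m : ℕ) (x : ℕ) :
    (∀ i ≤ m, (1 : ℚ_[p]) + q ^ (i + 1) ≠ 0) ∧
    Tendsto
      (fun N : ℕ =>
        (1 / ((1 + q ^ p ^ N) / (1 + q))) *
          ∑ y ∈ Finset.range (p ^ N),
            ((1 - q ^ (x + y)) / (1 - q)) ^ m * (-q) ^ y)
      atTop
      (nhds ((1 + q) * (1 / (1 - q)) ^ m *
        ∑ i ∈ Finset.range (m + 1),
          (m.choose i : ℚ_[p]) * (-1) ^ i * q ^ (i * x) / (1 + q ^ (i + 1)))) := by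
  have hne : ∀ i : ℕ, (1 : ℚ_[p]) + q ^ (i + 1) ≠ 0 := fun i => aux_ne p hp q hq (i + 1)
  refine ⟨fun i _ => hne i, ?_⟩
  have hB : (1 : ℚ_[p]) + q ≠ 0 := by simpa using hne 0
  have hsub : (1 : ℚ_[p]) - q ≠ 0 := sub_ne_zero.mpr (Ne.symm hq1)
  set g : ℕ → ℕ → ℚ_[p] := fun i N =>
    (m.choose i : ℚ_[p]) * (-1) ^ i * q ^ (i * x) *
      ((1 + q) * (1 + q ^ ((i + 1) * p ^ N)) / ((1 + q ^ p ^ N) * (1 + q ^ (i + 1)))) with hg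
  have heq : ∀ N : ℕ,
      (1 / ((1 + q ^ p ^ N) / (1 + q))) *
        ∑ y ∈ Finset.range (p ^ N), ((1 - q ^ (x + y)) / (1 - q)) ^ m * (-q) ^ y
      = (1 / (1 - q)) ^ m * ∑ i ∈ Finset.range (m + 1), g i N := by
    intro N
    have hA : (1 : ℚ_[p]) + q ^ p ^ N ≠ 0 := aux_ne p hp q hq (p ^ N)
    have hoddP : Odd (p ^ N) := hp.pow
    have hinner : ∀ i : ℕ,
        ∑ y ∈ Finset.range (p ^ N), (-q ^ (x + y)) ^ i * (-q) ^ y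
        = (-1) ^ i * q ^ (i * x) * ((1 + q ^ ((i + 1) * p ^ N)) / (1 + q ^ (i + 1))) := by
      intro i
      have hstep : ∀ y : ℕ, (-q ^ (x + y)) ^ i * (-q) ^ y
          = (-1) ^ i * q ^ (i * x) * (-q ^ (i + 1)) ^ y := by
        intro y; ring
      have hne1 : (-q ^ (i + 1) : ℚ_[p]) ≠ 1 := by
        intro h
        apply hne i
        linear_combination -h
      calc ∑ y ∈ Finset.range (p ^ N), (-q ^ (x + y)) ^ i * (-q) ^ y
          = ∑ y ∈ Finset.range (p ^ N), (-1) ^ i * q ^ (i * x) * (-q ^ (i + 1)) ^ y :=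
            Finset.sum_congr rfl (fun y _ => hstep y)
        _ = (-1) ^ i * q ^ (i * x) * ∑ y ∈ Finset.range (p ^ N), (-q ^ (i + 1)) ^ y := by
            rw [← Finset.mul_sum]
        _ = (-1) ^ i * q ^ (i * x) * (((-q ^ (i + 1)) ^ p ^ N - 1) / (-q ^ (i + 1) - 1)) := by
            rw [geom_sum_eq hne1]
        _ = (-1) ^ i * q ^ (i * x) * ((1 + q ^ ((i + 1) * p ^ N)) / (1 + q ^ (i + 1))) := by
            congr 1
            rw [hoddP.neg_pow, ← pow_mul]
            rw [div_eq_div_iff (by intro h; apply hne i; linear_combination -h)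
              (by intro h; apply hne i; linear_combination h)]
            ring
    calc (1 / ((1 + q ^ p ^ N) / (1 + q))) *
          ∑ y ∈ Finset.range (p ^ N), ((1 - q ^ (x + y)) / (1 - q)) ^ m * (-q) ^ y
        = ((1 + q) / (1 + q ^ p ^ N)) *
          ∑ y ∈ Finset.range (p ^ N),
            ((1 / (1 - q)) ^ m * ∑ i ∈ Finset.range (m + 1),
               ((-q ^ (x + y)) ^ i * (-q) ^ y) * (m.choose i : ℚ_[p])) := by
          rw [one_div_div]
          congr 1
          refine Finset.sum_congr rfl (fun y _ => ?_)
          have hb : ((1 : ℚ_[p]) - q ^ (x + y)) = (-q ^ (x + y)) + 1 := by ring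
          rw [div_pow, hb, add_pow, div_mul_eq_mul_div, Finset.sum_mul, Finset.sum_div,
            Finset.mul_sum]
          refine Finset.sum_congr rfl (fun i _ => ?_)
          field_simp
          have h' : (1 - q)⁻¹ ^ m * (1 - q) ^ m = 1 := by rw [← mul_pow, inv_mul_cancel₀ hsub, one_pow]
          linear_combination (-(q ^ (x * i) * q ^ y * q ^ (y * i) * ↑(m.choose i) * (-1) ^ y * (-1) ^ i)) * h'
      _ = ((1 + q) / (1 + q ^ p ^ N)) * ((1 / (1 - q)) ^ m *
            ∑ i ∈ Finset.range (m + 1), (m.choose i : ℚ_[p]) *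
              ∑ y ∈ Finset.range (p ^ N), (-q ^ (x + y)) ^ i * (-q) ^ y) := by
          congr 1
          rw [← Finset.mul_sum, Finset.sum_comm]
          congr 1
          refine Finset.sum_congr rfl (fun i _ => ?_)
          rw [Finset.mul_sum]
          refine Finset.sum_congr rfl (fun y _ => ?_)
          ring
      _ = (1 / (1 - q)) ^ m * ∑ i ∈ Finset.range (m + 1), g i N := by
          simp only [hinner, Finset.mul_sum]
          refine Finset.sum_congr rfl (fun i _ => ?_)
          have h1 := hne i
          simp only [hg]
          field_simp
  have hlimQ : Tendsto (fun N : ℕ => q ^ p ^ N) atTop (nhds 1) := aux_tendsto p q hq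
  have hlimg : ∀ i : ℕ, Tendsto (fun N => g i N) atTop
      (nhds ((m.choose i : ℚ_[p]) * (-1) ^ i * q ^ (i * x) * ((1 + q) / (1 + q ^ (i + 1))))) := by
    intro i
    have hpow : Tendsto (fun N : ℕ => q ^ ((i + 1) * p ^ N)) atTop (nhds 1) := by
      have h1 : (fun N : ℕ => q ^ ((i + 1) * p ^ N)) = fun N => (q ^ p ^ N) ^ (i + 1) := by
        funext N; rw [← pow_mul, mul_comm]
      rw [h1]
      simpa using hlimQ.pow (i + 1)
    have hnum : Tendsto (fun N : ℕ => (1 + q) * (1 + q ^ ((i + 1) * p ^ N))) atTop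
        (nhds ((1 + q) * (1 + 1))) :=
      tendsto_const_nhds.mul (tendsto_const_nhds.add hpow)
    have hden : Tendsto (fun N : ℕ => (1 + q ^ p ^ N) * (1 + q ^ (i + 1))) atTop
        (nhds ((1 + 1) * (1 + q ^ (i + 1)))) :=
      ((tendsto_const_nhds.add hlimQ).mul tendsto_const_nhds)
    have hdne : ((1 : ℚ_[p]) + 1) * (1 + q ^ (i + 1)) ≠ 0 :=
      mul_ne_zero (by norm_num) (hne i)
    have hdiv := hnum.div hden hdne
    have := hdiv.const_mul ((m.choose i : ℚ_[p]) * (-1) ^ i * q ^ (i * x))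
    have hval : (m.choose i : ℚ_[p]) * (-1) ^ i * q ^ (i * x) *
        ((1 + q) * (1 + 1) / ((1 + 1) * (1 + q ^ (i + 1))))
        = (m.choose i : ℚ_[p]) * (-1) ^ i * q ^ (i * x) * ((1 + q) / (1 + q ^ (i + 1))) := by
      have h1 := hne i
      have h2 : ((1 : ℚ_[p]) + 1) ≠ 0 := by norm_num
      field_simp
    rw [hval] at this
    exact this.congr (fun N => by simp only [hg, Pi.div_apply])
  have hsum : Tendsto (fun N : ℕ => ∑ i ∈ Finset.range (m + 1), g i N) atTop
      (nhds (∑ i ∈ Finset.range (m + 1),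
        (m.choose i : ℚ_[p]) * (-1) ^ i * q ^ (i * x) * ((1 + q) / (1 + q ^ (i + 1))))) :=
    tendsto_finset_sum _ (fun i _ => hlimg i)
  have hfinal := hsum.const_mul ((1 / (1 - q)) ^ m)
  have hfun : (fun N : ℕ =>
      (1 / ((1 + q ^ p ^ N) / (1 + q))) *
        ∑ y ∈ Finset.range (p ^ N), ((1 - q ^ (x + y)) / (1 - q)) ^ m * (-q) ^ y)
      = fun N => (1 / (1 - q)) ^ m * ∑ i ∈ Finset.range (m + 1), g i N := funext heq
  have hvals : (1 + q) * (1 / (1 - q)) ^ m *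
      ∑ i ∈ Finset.range (m + 1),
        (m.choose i : ℚ_[p]) * (-1) ^ i * q ^ (i * x) / (1 + q ^ (i + 1))
      = (1 / (1 - q)) ^ m * ∑ i ∈ Finset.range (m + 1),
        (m.choose i : ℚ_[p]) * (-1) ^ i * q ^ (i * x) * ((1 + q) / (1 + q ^ (i + 1))) := by
    rw [mul_comm (1 + q) ((1 / (1 - q)) ^ m), mul_assoc, Finset.mul_sum]
    congr 1
    refine Finset.sum_congr rfl (fun i _ => ?_)
    ring
  rw [hvals, hfun]
  exact hfinal
end

section
/- Let p be a fixed odd prime and let q ∈ ℚ_p satisfy ‖q − 1‖_p < 1 and q ≠ 1. Then the first q-Euler number E_{1,q}, i.e., the fermionic p-adic q-integral of y ↦ [y]_q, equals −q/(1 + q^2): lim_{N→∞} (1/[p^N]_{−q}) Σ_{y=0}^{p^N − 1} [y]_q (−q)^y = −q/[2]_{q^2}, where [2]_{q^2} = 1 + q^2 ≠ 0. -/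
open Filter Finset

private lemma padic_norm_sum_le {p : ℕ} [Fact p.Prime] {ι : Type*} (s : Finset ι)
    (f : ι → ℚ_[p]) {C : ℝ} (hC : 0 ≤ C) (h : ∀ i ∈ s, ‖f i‖ ≤ C) :
    ‖∑ i ∈ s, f i‖ ≤ C := by
  induction s using Finset.cons_induction with
  | empty => simpa
  | cons a s ha ih =>
    rw [Finset.sum_cons]
    exact le_trans (Padic.nonarchimedean _ _)
      (max_le (h a (Finset.mem_cons_self _ _))
        (ih fun i hi => h i (Finset.mem_cons.2 (Or.inr hi))))

private lemma padic_norm_le_inv {p : ℕ} [Fact p.Prime] {x : ℚ_[p]} (h : ‖x‖ < 1) :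
    ‖x‖ ≤ (p : ℝ)⁻¹ := by
  have := (Padic.norm_le_pow_iff_norm_lt_pow_add_one x (-1)).2 (by simpa using h)
  simpa using this

private lemma padic_norm_le_one_of {p : ℕ} [Fact p.Prime] {x : ℚ_[p]} (h : ‖x - 1‖ < 1) :
    ‖x‖ ≤ 1 := by
  have : x = (x - 1) + 1 := by ring
  rw [this]
  exact le_trans (Padic.nonarchimedean _ _) (max_le h.le (by simp))

private lemma padic_pow_sub_one {p : ℕ} [Fact p.Prime] {x : ℚ_[p]} (h : ‖x - 1‖ < 1) :
    ‖x ^ p - 1‖ ≤ (p : ℝ)⁻¹ * ‖x - 1‖ := by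
  have hx1 : ‖x‖ ≤ 1 := padic_norm_le_one_of h
  have hgeom : x ^ p - 1 = (∑ i ∈ Finset.range p, x ^ i) * (x - 1) := (geom_sum_mul x p).symm
  have hsum : ‖∑ i ∈ Finset.range p, x ^ i‖ ≤ (p : ℝ)⁻¹ := by
    have hrw : (∑ i ∈ Finset.range p, x ^ i) =
        (∑ i ∈ Finset.range p, (x ^ i - 1)) + (p : ℚ_[p]) := by
      rw [Finset.sum_sub_distrib]
      simp
    rw [hrw]
    refine le_trans (Padic.nonarchimedean _ _) (max_le ?_ ?_)
    · refine padic_norm_sum_le _ _ (by positivity) fun i _ => ?_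
      have : x ^ i - 1 = (∑ j ∈ Finset.range i, x ^ j) * (x - 1) := (geom_sum_mul x i).symm
      rw [this, norm_mul]
      calc ‖∑ j ∈ Finset.range i, x ^ j‖ * ‖x - 1‖
          ≤ 1 * ‖x - 1‖ := by
            gcongr
            exact padic_norm_sum_le _ _ zero_le_one fun j _ => by
              simpa using pow_le_one₀ (norm_nonneg x) hx1
        _ = ‖x - 1‖ := one_mul _
        _ ≤ (p : ℝ)⁻¹ := padic_norm_le_inv h
    · simp [Padic.norm_p]
  rw [hgeom, norm_mul]
  gcongr

private lemma padic_pow_norm_lt {p : ℕ} [Fact p.Prime] {q : ℚ_[p]} (hq : ‖q - 1‖ < 1) (N : ℕ) :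
    ‖q ^ p ^ N - 1‖ < 1 := by
  induction N with
  | zero => simpa
  | succ n ih =>
    have h := padic_pow_sub_one ih
    have hrw : q ^ p ^ (n + 1) = (q ^ p ^ n) ^ p := by rw [← pow_mul, pow_succ]
    rw [hrw]
    refine lt_of_le_of_lt h ?_
    have hb : (p : ℝ)⁻¹ ≤ 1 :=
      inv_le_one_of_one_le₀ (by exact_mod_cast (Fact.out (p := p.Prime)).one_lt.le)
    calc (p : ℝ)⁻¹ * ‖q ^ p ^ n - 1‖ ≤ 1 * ‖q ^ p ^ n - 1‖ :=
          mul_le_mul_of_nonneg_right hb (norm_nonneg _)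
      _ < 1 := by rw [one_mul]; exact ih

private lemma padic_pow_tendsto {p : ℕ} [Fact p.Prime] {q : ℚ_[p]} (hq : ‖q - 1‖ < 1) :
    Filter.Tendsto (fun N : ℕ => q ^ p ^ N) Filter.atTop (nhds 1) := by
  have hp1 : (1 : ℝ) < p := Nat.one_lt_cast.2 (Fact.out (p := p.Prime)).one_lt
  have hppos : (0 : ℝ) < (p : ℝ)⁻¹ := by positivity
  have key : ∀ N : ℕ, ‖q ^ p ^ N - 1‖ ≤ ((p : ℝ)⁻¹) ^ N * ‖q - 1‖ := by
    intro N
    induction N with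
    | zero => simp
    | succ n ih =>
      have hlt : ‖q ^ p ^ n - 1‖ < 1 := padic_pow_norm_lt hq n
      have := padic_pow_sub_one hlt
      have hrw : q ^ p ^ (n + 1) = (q ^ p ^ n) ^ p := by
        rw [← pow_mul, pow_succ]
      rw [hrw]
      calc ‖(q ^ p ^ n) ^ p - 1‖ ≤ (p : ℝ)⁻¹ * ‖q ^ p ^ n - 1‖ := this
        _ ≤ (p : ℝ)⁻¹ * (((p : ℝ)⁻¹) ^ n * ‖q - 1‖) := by gcongr
        _ = ((p : ℝ)⁻¹) ^ (n + 1) * ‖q - 1‖ := by ring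
  have h0 : Filter.Tendsto (fun N : ℕ => ((p : ℝ)⁻¹) ^ N * ‖q - 1‖) Filter.atTop (nhds 0) := by
    have h1 : Filter.Tendsto (fun N : ℕ => ((p : ℝ)⁻¹) ^ N) Filter.atTop (nhds 0) :=
      tendsto_pow_atTop_nhds_zero_of_lt_one hppos.le (inv_lt_one_of_one_lt₀ hp1)
    simpa using h1.mul_const ‖q - 1‖
  have hlim : Filter.Tendsto (fun N : ℕ => ‖q ^ p ^ N - 1‖) Filter.atTop (nhds 0) :=
    squeeze_zero (fun _ => norm_nonneg _) key h0
  exact tendsto_iff_norm_sub_tendsto_zero.2 hlim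

theorem stmt_6 (p : ℕ) [Fact p.Prime] (hp : Odd p)
    (q : ℚ_[p]) (hq : ‖q - 1‖ < 1) (hq1 : q ≠ 1) :
    (1 : ℚ_[p]) + q ^ 2 ≠ 0 ∧
    Tendsto
      (fun N : ℕ =>
        (1 / ((1 + q ^ p ^ N) / (1 + q))) *
          ∑ y ∈ Finset.range (p ^ N), ((1 - q ^ y) / (1 - q)) * (-q) ^ y)
      atTop (nhds (-q / (1 + q ^ 2))) := by
  have hfact : Fact p.Prime := inferInstance
  -- basic norm facts
  have h2 : ‖(2 : ℚ_[p])‖ = 1 := by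
    have hle : ‖((2 : ℤ) : ℚ_[p])‖ ≤ 1 := Padic.norm_int_le_one 2
    have hnlt : ¬ ‖((2 : ℤ) : ℚ_[p])‖ < 1 := by
      rw [Padic.norm_intCast_lt_one_iff]
      intro hdvd
      have hdvd' : p ∣ 2 := by exact_mod_cast hdvd
      have hp2 : p = 2 := (Nat.prime_dvd_prime_iff_eq hfact.out Nat.prime_two).1 hdvd'
      rw [hp2] at hp
      exact absurd hp (by decide)
    have : ‖((2 : ℤ) : ℚ_[p])‖ = 1 := le_antisymm hle (not_lt.1 hnlt)
    simpa using this
  have norm_one_add : ∀ x : ℚ_[p], ‖x - 1‖ < 1 → ‖1 + x‖ = 1 := by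
    intro x hx
    have : (1 : ℚ_[p]) + x = (x - 1) + 2 := by ring
    rw [this, Padic.add_eq_max_of_ne (by rw [h2]; exact ne_of_lt hx), h2]
    exact max_eq_right hx.le
  have hq2 : ‖q ^ 2 - 1‖ < 1 := by
    have : q ^ 2 - 1 = (q + 1) * (q - 1) := by ring
    rw [this, norm_mul]
    calc ‖q + 1‖ * ‖q - 1‖ ≤ 1 * ‖q - 1‖ := by
          gcongr
          rw [add_comm]
          exact (norm_one_add q hq).le
      _ = ‖q - 1‖ := one_mul _
      _ < 1 := hq
  have h1q : (1 : ℚ_[p]) + q ≠ 0 := by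
    intro h; have := norm_one_add q hq; rw [h] at this; simp at this
  have h1q2 : (1 : ℚ_[p]) + q ^ 2 ≠ 0 := by
    intro h; have := norm_one_add (q ^ 2) hq2; rw [h] at this; simp at this
  refine ⟨h1q2, ?_⟩
  have h1q' : q + 1 ≠ 0 := by rw [add_comm]; exact h1q
  have hq1' : (1 : ℚ_[p]) - q ≠ 0 := sub_ne_zero.2 (fun h => hq1 h.symm)
  have hnegq : -q ≠ 1 := by
    intro h
    apply h1q
    rw [← h]; ring
  have hnegq2 : -q ^ 2 ≠ 1 := by
    intro h
    apply h1q2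
    rw [← h]; ring
  -- the function F
  set F : ℚ_[p] → ℚ_[p] := fun x =>
    (1 + q) / (1 + x) * (((x + 1) / (q + 1) - (x ^ 2 + 1) / (q ^ 2 + 1)) / (1 - q)) with hF
  have hFval : F 1 = -q / (1 + q ^ 2) := by
    rw [hF]
    have h2ne : (2 : ℚ_[p]) ≠ 0 := by
      intro h; rw [h] at h2; simp at h2
    have hA : q ^ 2 + 1 ≠ 0 := by rw [add_comm]; exact h1q2
    have hB : (1 : ℚ_[p]) + 1 ≠ 0 := by
      intro h
      apply h2ne
      rw [show (2 : ℚ_[p]) = 1 + 1 by norm_num, h]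
    field_simp [hB, h1q', hA, hq1', h1q2]
    ring
  have hcont : ContinuousAt F 1 := by
    have h11 : (1 : ℚ_[p]) + 1 ≠ 0 := by
      intro h
      have : ((1 : ℚ_[p]) + 1) = 2 := by norm_num
      rw [this] at h; rw [h] at h2; simp at h2
    apply ContinuousAt.mul
    · exact (continuousAt_const.div (by fun_prop) h11)
    · apply ContinuousAt.div _ continuousAt_const hq1'
      apply ContinuousAt.sub
      · exact ((continuousAt_id.add continuousAt_const).div continuousAt_const h1q')
      · exact (((continuousAt_id.pow 2).add continuousAt_const).div continuousAt_const
          (by rw [add_comm]; exact h1q2))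
  have hpow := padic_pow_tendsto (p := p) hq
  have hmain := hcont.tendsto.comp hpow
  rw [hFval] at hmain
  refine hmain.congr fun N => ?_
  -- show F (q ^ p ^ N) equals the partial expression
  have hMNodd : Odd (p ^ N) := hp.pow
  have hsum : ∑ y ∈ Finset.range (p ^ N), ((1 - q ^ y) / (1 - q)) * (-q) ^ y
      = ((q ^ p ^ N + 1) / (q + 1) - ((q ^ p ^ N) ^ 2 + 1) / (q ^ 2 + 1)) / (1 - q) := by
    have hterm : ∀ y : ℕ, ((1 - q ^ y) / (1 - q)) * (-q) ^ y
        = ((-q) ^ y - (-q ^ 2) ^ y) / (1 - q) := by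
      intro y
      have : (-q ^ 2 : ℚ_[p]) ^ y = (-q) ^ y * q ^ y := by
        rw [← mul_pow]; congr 1; ring
      rw [this]
      field_simp
    calc ∑ y ∈ Finset.range (p ^ N), ((1 - q ^ y) / (1 - q)) * (-q) ^ y
        = (∑ y ∈ Finset.range (p ^ N), ((-q) ^ y - (-q ^ 2) ^ y)) / (1 - q) := by
          rw [Finset.sum_div]
          exact Finset.sum_congr rfl fun y _ => hterm y
      _ = (((-q) ^ p ^ N - 1) / (-q - 1) - ((-q ^ 2) ^ p ^ N - 1) / (-q ^ 2 - 1)) / (1 - q) := by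
          rw [Finset.sum_sub_distrib, geom_sum_eq hnegq, geom_sum_eq hnegq2]
      _ = ((q ^ p ^ N + 1) / (q + 1) - ((q ^ p ^ N) ^ 2 + 1) / (q ^ 2 + 1)) / (1 - q) := by
          rw [hMNodd.neg_pow, hMNodd.neg_pow]
          rw [← pow_mul, mul_comm 2 (p ^ N), pow_mul]
          congr 1
          rw [div_sub_div _ _ (fun h => h1q' (by linear_combination -h))
            (fun h => h1q2 (by linear_combination -h))]
          rw [div_sub_div _ _ h1q' (by rw [add_comm] at h1q2; exact h1q2)]
          congr 1 <;> ring
  simp only [Function.comp]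
  rw [hF, hsum]
  have hqN : ‖q ^ p ^ N - 1‖ < 1 := padic_pow_norm_lt hq N
  have hden : (1 : ℚ_[p]) + q ^ p ^ N ≠ 0 := by
    intro h; have := norm_one_add _ hqN; rw [h] at this; simp at this
  rw [one_div_div]
end

section
/- Let p be a prime and let x ∈ ℚ_p satisfy ‖x‖_p < 1. Then both series L(x) = Σ_{n=1}^{∞} ((−1)^{n+1}/n) x^{n} and S(x) = Σ_{n=1}^{∞} ((−1)^{n+1}/(n(n+1))) x^{n+1} converge in ℚ_p, and (1 + x)·L(x) = x + S(x). (Here L(x) is the p-adic logarithm of 1 + x.) -/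
lemma aux_norm_nat_ge (p : ℕ) [hp : Fact p.Prime] (m : ℕ) (hm : m ≠ 0) :
    (1 : ℝ) / m ≤ ‖((m : ℕ) : ℚ_[p])‖ := by
  have h1 : ((m : ℚ_[p])) = ((m : ℚ) : ℚ_[p]) := by norm_cast
  have h2 : padicNorm p (m : ℚ) = ((p : ℚ) ^ (padicValNat p m : ℕ))⁻¹ := by
    rw [padicNorm.eq_zpow_of_nonzero (by exact_mod_cast hm)]
    rw [padicValRat.of_nat, zpow_neg, zpow_natCast]
  rw [h1, Padic.eq_padicNorm, h2]
  have hle : (p : ℝ) ^ (padicValNat p m : ℕ) ≤ m := by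
    exact_mod_cast Nat.le_of_dvd (Nat.pos_of_ne_zero hm) pow_padicValNat_dvd
  have hppos : (0 : ℝ) < p := by exact_mod_cast hp.out.pos
  push_cast
  rw [one_div]
  exact inv_anti₀ (by positivity) hle

lemma aux_norm_inv_le (p : ℕ) [Fact p.Prime] (m : ℕ) (hm : m ≠ 0) :
    ‖((m : ℕ) : ℚ_[p])‖⁻¹ ≤ (m : ℝ) := by
  have h := aux_norm_nat_ge p m hm
  have hpos : (0 : ℝ) < ‖((m : ℕ) : ℚ_[p])‖ := by
    have : (0:ℝ) < 1 / m := by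
      have : (0:ℝ) < m := by exact_mod_cast Nat.pos_of_ne_zero hm
      positivity
    linarith
  rw [inv_le_comm₀ hpos (by exact_mod_cast Nat.pos_of_ne_zero hm)]
  rwa [one_div] at h

lemma aux_summable (p : ℕ) [Fact p.Prime] (x : ℚ_[p]) (hx : ‖x‖ < 1)
    (c : ℕ → ℚ_[p]) (hc : ∀ n, ‖c n‖ ≤ ((n : ℝ) + 2) ^ 2) :
    Summable (fun n => c n * x ^ (n + 1)) := by
  apply Summable.of_norm
  have hsum : Summable (fun n : ℕ => ((n : ℝ) + 2) ^ 2 * ‖x‖ ^ (n + 1)) := by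
    have h2 := summable_pow_mul_geometric_of_norm_lt_one (R := ℝ) (r := ‖x‖) 2 (by simpa using hx)
    have h1 := summable_pow_mul_geometric_of_norm_lt_one (R := ℝ) (r := ‖x‖) 1 (by simpa using hx)
    have h0 := summable_geometric_of_lt_one (norm_nonneg x) hx
    have := (((h2.add (h1.mul_left 4)).add (h0.mul_left 4)).mul_left ‖x‖)
    exact this.congr (fun n => by ring)
  apply Summable.of_nonneg_of_le (fun n => norm_nonneg _) _ hsum
  intro n
  rw [norm_mul, norm_pow]
  exact mul_le_mul_of_nonneg_right (hc n) (by positivity)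

theorem stmt_9 (p : ℕ) [Fact p.Prime] (x : ℚ_[p]) (hx : ‖x‖ < 1) :
    ∃ L S : ℚ_[p],
      HasSum (fun n : ℕ => (-1 : ℚ_[p]) ^ (n + 1 + 1) * x ^ (n + 1) / (n + 1)) L ∧
      HasSum
        (fun n : ℕ =>
          ((-1 : ℚ_[p]) ^ (n + 1 + 1) / ((n + 1) * (n + 1 + 1))) * x ^ (n + 1 + 1))
        S ∧
      (1 + x) * L = x + S := by
  have hcast : ∀ n : ℕ, ((n : ℚ_[p]) + 1) = ((n + 1 : ℕ) : ℚ_[p]) := fun n => by push_cast; ring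
  have hcast2 : ∀ n : ℕ, ((n : ℚ_[p]) + 2) = ((n + 2 : ℕ) : ℚ_[p]) := fun n => by push_cast; ring
  have hnz : ∀ n : ℕ, ((n : ℚ_[p]) + 1) ≠ 0 := fun n => Nat.cast_add_one_ne_zero n
  have hnz2 : ∀ n : ℕ, ((n : ℚ_[p]) + 2) ≠ 0 := fun n => by
    rw [hcast2]; exact Nat.cast_ne_zero.mpr (by omega)
  have hxb : ‖x‖ ≤ 1 := hx.le
  set f : ℕ → ℚ_[p] := fun n => (-1 : ℚ_[p]) ^ (n + 1 + 1) * x ^ (n + 1) / (n + 1) with hf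
  set g : ℕ → ℚ_[p] := fun n =>
    ((-1 : ℚ_[p]) ^ (n + 1 + 1) / ((n + 1) * (n + 1 + 1))) * x ^ (n + 1 + 1) with hg
  have hfs : Summable f := by
    have := aux_summable p x hx (fun n => (-1 : ℚ_[p]) ^ (n + 1 + 1) / ((n : ℚ_[p]) + 1)) ?_
    · exact this.congr (fun n => by simp only [hf]; ring)
    · intro n
      simp only [norm_div, norm_pow, norm_neg, norm_one, one_pow, one_div, hcast]
      calc ‖((n + 1 : ℕ) : ℚ_[p])‖⁻¹ ≤ ((n : ℝ) + 1) := by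
            have := aux_norm_inv_le p (n + 1) (by omega)
            push_cast at this ⊢; linarith
        _ ≤ ((n : ℝ) + 2) ^ 2 := by nlinarith [Nat.cast_nonneg (α := ℝ) n]
  have hgs : Summable g := by
    have := aux_summable p x hx
      (fun n => ((-1 : ℚ_[p]) ^ (n + 1 + 1) / (((n : ℚ_[p]) + 1) * ((n : ℚ_[p]) + 2))) * x) ?_
    · exact this.congr (fun n => by simp only [hg]; ring)
    · intro n
      simp only [norm_mul, norm_div, norm_pow, norm_neg, norm_one, one_pow, one_div,
        norm_inv, mul_inv, hcast, hcast2]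
      have b1 : ‖((n + 1 : ℕ) : ℚ_[p])‖⁻¹ ≤ ((n : ℝ) + 1) := by
        have := aux_norm_inv_le p (n + 1) (by omega); push_cast at this ⊢; linarith
      have b2 : ‖((n + 2 : ℕ) : ℚ_[p])‖⁻¹ ≤ ((n : ℝ) + 2) := by
        have := aux_norm_inv_le p (n + 2) (by omega); push_cast at this ⊢; linarith
      have nn1 : (0:ℝ) ≤ ‖((n + 1 : ℕ) : ℚ_[p])‖⁻¹ := by positivity
      have nn2 : (0:ℝ) ≤ ‖((n + 2 : ℕ) : ℚ_[p])‖⁻¹ := by positivity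
      calc ‖((n + 1 : ℕ) : ℚ_[p])‖⁻¹ * ‖((n + 2 : ℕ) : ℚ_[p])‖⁻¹ * ‖x‖
          ≤ ((n : ℝ) + 1) * ((n : ℝ) + 2) * 1 := by
            apply mul_le_mul _ hxb (norm_nonneg x) (by positivity)
            exact mul_le_mul b1 b2 nn2 (by positivity)
        _ ≤ ((n : ℝ) + 2) ^ 2 := by nlinarith [Nat.cast_nonneg (α := ℝ) n]
  obtain ⟨L, hL⟩ := hfs
  obtain ⟨S, hS⟩ := hgs
  refine ⟨L, S, hL, hS, ?_⟩
  have h1 : HasSum (fun n => f (n + 1)) (L - f 0) := by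
    have := (hasSum_nat_add_iff' (f := f) 1).mpr hL
    simpa using this
  have h2 : HasSum (fun n => x * f n) (x * L) := hL.mul_left x
  have h3 := h1.add h2
  have hfg : (fun n => f (n + 1) + x * f n) = g := by
    funext n
    simp only [hf, hg]
    have e1 := hnz n
    have e2 := hnz2 n
    have e1' : (1 : ℚ_[p]) + n ≠ 0 := by rw [add_comm]; exact e1
    have key : ((n:ℚ_[p])+1)⁻¹ - ((n:ℚ_[p])+2)⁻¹ = ((n:ℚ_[p])+1)⁻¹ * ((n:ℚ_[p])+2)⁻¹ := by
      rw [inv_sub_inv e1 e2, show ((n:ℚ_[p])+2) - ((n:ℚ_[p])+1) = 1 by ring, div_eq_mul_inv,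
        one_mul, mul_inv]
    push_cast
    simp only [div_eq_mul_inv, mul_inv]
    linear_combination ((-1:ℚ_[p])^n * x^(n+2)) * key
  rw [hfg] at h3
  have hSe : S = L - f 0 + x * L := hS.unique h3
  have hf0 : f 0 = x := by simp [hf]
  rw [hSe, hf0]
  ring
end

section
/- For every nonnegative integer n, the q-Euler numbers converge to the ordinary Euler numbers as q → 1: the function of a real variable q given by E_{n,q} = (1 + q)·(1/(1 − q))^n · Σ_{i=0}^{n} C(n, i)(−1)^i/(1 + q^{i+1}) (defined for real q near 1 with q ≠ 1, and by E_{0,q} = (1+q)·(1/(1+q)) = 1 for n = 0) tends, as q → 1 with q ≠ 1, to the n-th Euler number E_n, where E_n is the n-th derivative at t = 0 of the function t ↦ 2/(e^t + 1). -/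
open Filter Finset Topology

noncomputable def Saux (n m : ℕ) : ℝ :=
  ∑ i ∈ Finset.range (n + 1), (-1 : ℝ) ^ i * (n.choose i : ℝ) * ((i : ℝ) + 1) ^ m

lemma Saux_rec (n m : ℕ) :
    Saux (n + 1) m = -∑ r ∈ Finset.range m, (m.choose r : ℝ) * Saux n r := by
  set A : ℝ := ∑ j ∈ Finset.range (n + 1),
      (-1 : ℝ) ^ j * (n.choose j : ℝ) * ((j : ℝ) + 2) ^ m with hA
  set B : ℝ := ∑ j ∈ Finset.range n,
      (-1 : ℝ) ^ (j + 1) * (n.choose (j + 1) : ℝ) * ((j : ℝ) + 2) ^ m with hB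
  have e0 : Saux (n + 1) m = (∑ j ∈ Finset.range (n + 1),
      (-1 : ℝ) ^ (j + 1) * ((n + 1).choose (j + 1) : ℝ) * ((j : ℝ) + 2) ^ m) + 1 := by
    rw [Saux, Finset.sum_range_succ']
    congr 1
    · refine Finset.sum_congr rfl fun j _ => ?_
      push_cast
      ring
    · simp
  have e1 : ∑ j ∈ Finset.range (n + 1),
      (-1 : ℝ) ^ (j + 1) * ((n + 1).choose (j + 1) : ℝ) * ((j : ℝ) + 2) ^ m = -A + B := by
    have split : ∀ j ∈ Finset.range (n + 1),
        (-1 : ℝ) ^ (j + 1) * ((n + 1).choose (j + 1) : ℝ) * ((j : ℝ) + 2) ^ m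
        = -((-1 : ℝ) ^ j * (n.choose j : ℝ) * ((j : ℝ) + 2) ^ m)
          + (-1 : ℝ) ^ (j + 1) * (n.choose (j + 1) : ℝ) * ((j : ℝ) + 2) ^ m := by
      intro j _
      rw [Nat.choose_succ_succ]
      push_cast
      ring
    rw [Finset.sum_congr rfl split, Finset.sum_add_distrib, Finset.sum_neg_distrib, ← hA]
    congr 1
    rw [hB, Finset.sum_range_succ, Nat.choose_succ_self]
    simp
  have e2 : Saux n m = B + 1 := by
    rw [Saux, Finset.sum_range_succ']
    congr 1
    · refine Finset.sum_congr rfl fun j _ => ?_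
      push_cast
      ring
    · simp
  have h1 : Saux (n + 1) m = Saux n m - A := by
    rw [e0, e1, e2]; ring
  have h4 : A = ∑ r ∈ Finset.range (m + 1), (m.choose r : ℝ) * Saux n r := by
    have hexp : ∀ j : ℕ, ((j : ℝ) + 2) ^ m
        = ∑ r ∈ Finset.range (m + 1), ((j : ℝ) + 1) ^ r * (m.choose r : ℝ) := by
      intro j
      have h := add_pow ((j : ℝ) + 1) 1 m
      rw [show ((j : ℝ) + 2) = ((j : ℝ) + 1) + 1 by ring, h]
      exact Finset.sum_congr rfl fun r _ => by ring
    calc A = ∑ j ∈ Finset.range (n + 1), ∑ r ∈ Finset.range (m + 1),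
            (m.choose r : ℝ) * ((-1 : ℝ) ^ j * (n.choose j : ℝ) * ((j : ℝ) + 1) ^ r) := by
          refine Finset.sum_congr rfl fun j _ => ?_
          rw [hexp j, Finset.mul_sum]
          exact Finset.sum_congr rfl fun r _ => by ring
      _ = ∑ r ∈ Finset.range (m + 1), (m.choose r : ℝ) * Saux n r := by
          rw [Finset.sum_comm]
          exact Finset.sum_congr rfl fun r _ => by rw [Saux, Finset.mul_sum]
  rw [h1, h4, Finset.sum_range_succ, Nat.choose_self]
  push_cast
  ring


lemma Saux_spec (n : ℕ) :
    (∀ m, m < n → Saux n m = 0) ∧ Saux n n = (-1 : ℝ) ^ n * n.factorial := by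
  induction n with
  | zero =>
    refine ⟨fun m hm => absurd hm (Nat.not_lt_zero m), ?_⟩
    simp [Saux]
  | succ n ih =>
    have hlt : ∀ m, m < n + 1 → Saux (n + 1) m = 0 := by
      intro m hm
      rw [Saux_rec]
      rw [Finset.sum_eq_zero fun r hr => ?_, neg_zero]
      rw [ih.1 r (lt_of_lt_of_le (Finset.mem_range.mp hr) (Nat.lt_succ_iff.mp hm)), mul_zero]
    refine ⟨hlt, ?_⟩
    rw [Saux_rec, Finset.sum_range_succ, ih.2,
      Finset.sum_eq_zero fun r hr => by
        rw [ih.1 r (Finset.mem_range.mp hr), mul_zero], zero_add,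
      Nat.choose_succ_self_right]
    push_cast [Nat.factorial_succ]
    ring

lemma Saux_def (n m : ℕ) : Saux n m = ∑ i ∈ Finset.range (n + 1), (-1 : ℝ) ^ i * (n.choose i : ℝ) * ((i : ℝ) + 1) ^ m := rfl

lemma iteratedDeriv_fsum {ι : Type*} (s : Finset ι) (f : ι → ℝ → ℝ)
    (h : ∀ i ∈ s, ContDiff ℝ (⊤ : ℕ∞) (f i)) (m : ℕ) (x : ℝ) :
    iteratedDeriv m (fun t => ∑ i ∈ s, f i t) x = ∑ i ∈ s, iteratedDeriv m (f i) x := by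
  classical
  induction s using Finset.induction with
  | empty =>
    have hz : iteratedDeriv m (fun _ : ℝ => (0 : ℝ)) = fun _ => 0 := by
      rw [iteratedDeriv_eq_iterate]
      exact Function.iterate_fixed (deriv_const' (0:ℝ)) m
    simp [hz]
  | @insert a s hnotmem ih =>
    have ha := h a (Finset.mem_insert_self a s)
    have hs : ∀ i ∈ s, ContDiff ℝ (⊤ : ℕ∞) (f i) := fun i hi => h i (Finset.mem_insert_of_mem hi)
    have hsum : ContDiff ℝ (⊤ : ℕ∞) (fun t => ∑ i ∈ s, f i t) := ContDiff.sum fun i hi => hs i hi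
    simp only [Finset.sum_insert hnotmem]
    rw [← ih hs]
    have := iteratedDerivWithin_add (n := m) (Set.mem_univ x) uniqueDiffOn_univ
      (f := f a) (g := fun t => ∑ i ∈ s, f i t)
      (ha.contDiffWithinAt.of_le (by exact_mod_cast (le_top : (m : ℕ∞) ≤ ⊤))) (hsum.contDiffWithinAt.of_le (by exact_mod_cast (le_top : (m : ℕ∞) ≤ ⊤)))
    simpa [iteratedDerivWithin_univ, Pi.add_def] using this

lemma rate_lemma : ∀ (n : ℕ) (g : ℝ → ℝ), ContDiff ℝ (⊤ : ℕ∞) g →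
    (∀ k, k < n → iteratedDeriv k g 0 = 0) →
    Tendsto (fun t => g t / t ^ n) (𝓝[≠] (0 : ℝ))
      (𝓝 (iteratedDeriv n g 0 / n.factorial)) := by
  intro n
  induction n with
  | zero =>
    intro g hg _
    simpa using ((hg.continuous.tendsto 0).mono_left nhdsWithin_le_nhds)
  | succ n ih =>
    intro g hg hz
    have hgd : Differentiable ℝ g := hg.differentiable (by simp)
    have hdg : ContDiff ℝ (⊤ : ℕ∞) (deriv g) := (contDiff_infty_iff_deriv.mp hg).2
    have hz' : ∀ k, k < n → iteratedDeriv k (deriv g) 0 = 0 := by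
      intro k hk
      rw [← iteratedDeriv_succ']
      exact hz (k + 1) (by omega)
    have key : Tendsto (fun t : ℝ => deriv g t / (((n : ℝ) + 1) * t ^ n)) (𝓝[≠] 0)
        (𝓝 (iteratedDeriv (n + 1) g 0 / (n + 1).factorial)) := by
      have heq : (fun t : ℝ => deriv g t / (((n : ℝ) + 1) * t ^ n))
          = fun t => deriv g t / t ^ n / ((n : ℝ) + 1) := by
        funext t
        rw [div_div, mul_comm]
      rw [heq]
      have htend := (ih (deriv g) hdg hz').div_const ((n : ℝ) + 1)
      convert htend using 2
      rw [← iteratedDeriv_succ', div_div]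
      push_cast [Nat.factorial_succ]
      ring
    apply HasDerivAt.lhopital_zero_nhdsNE (f' := deriv g)
      (g' := fun t : ℝ => ((n : ℝ) + 1) * t ^ n)
    · exact Eventually.of_forall fun t => (hgd t).hasDerivAt
    · exact Eventually.of_forall fun t => by
        simpa using hasDerivAt_pow (n + 1) t
    · filter_upwards [self_mem_nhdsWithin] with t ht
      exact mul_ne_zero (by positivity) (pow_ne_zero _ ht)
    · have h0 : g 0 = 0 := by simpa using hz 0 (by omega)
      have := (hg.continuous.tendsto 0).mono_left (nhdsWithin_le_nhds (s := {(0:ℝ)}ᶜ))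
      rwa [h0] at this
    · have := ((continuous_pow (n + 1)).tendsto (0 : ℝ)).mono_left
        (nhdsWithin_le_nhds (s := {(0:ℝ)}ᶜ))
      simpa using this
    · exact key


theorem stmt_10 (n : ℕ) :
    Tendsto
      (fun q : ℝ =>
        (1 + q) * (1 / (1 - q)) ^ n *
          ∑ i ∈ Finset.range (n + 1),
            (n.choose i : ℝ) * (-1) ^ i / (1 + q ^ (i + 1)))
      (nhdsWithin 1 {1}ᶜ)
      (nhds (iteratedDeriv n (fun t : ℝ => 2 / (Real.exp t + 1)) 0)) := by
  set F : ℝ → ℝ := fun t => 2 / (Real.exp t + 1) with hF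
  have hFc : ContDiff ℝ (⊤ : ℕ∞) F :=
    contDiff_const.div (Real.contDiff_exp.add contDiff_const) (fun t => by positivity)
  set G : ℝ → ℝ := fun t => ∑ i ∈ Finset.range (n + 1),
      ((n.choose i : ℝ) * (-1) ^ i) * F (((i : ℝ) + 1) * t) with hG
  have hGi : ∀ i : ℕ, ContDiff ℝ (⊤ : ℕ∞)
      (fun t => ((n.choose i : ℝ) * (-1) ^ i) * F (((i : ℝ) + 1) * t)) :=
    fun i => contDiff_const.mul (hFc.comp (contDiff_const.mul contDiff_id))
  have hGc : ContDiff ℝ (⊤ : ℕ∞) G := ContDiff.sum fun i _ => hGi i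
  have hGd : ∀ m : ℕ, iteratedDeriv m G 0 = Saux n m * iteratedDeriv m F 0 := by
    intro m
    rw [hG, iteratedDeriv_fsum _ _ (fun i _ => hGi i) m 0]
    have hterm : ∀ i : ℕ,
        iteratedDeriv m (fun t => ((n.choose i : ℝ) * (-1) ^ i) * F (((i : ℝ) + 1) * t)) 0
        = ((n.choose i : ℝ) * (-1) ^ i) * (((i : ℝ) + 1) ^ m * iteratedDeriv m F 0) := by
      intro i
      have h1 : iteratedDeriv m (fun t => F (((i : ℝ) + 1) * t))
          = fun x => ((i : ℝ) + 1) ^ m * iteratedDeriv m F (((i : ℝ) + 1) * x) :=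
        iteratedDeriv_comp_const_mul (n := m) (hFc.of_le (by exact_mod_cast (le_top : (m : ℕ∞) ≤ ⊤))) _
      have h2 := iteratedDerivWithin_const_mul (n := m) (Set.mem_univ (0 : ℝ))
        uniqueDiffOn_univ ((n.choose i : ℝ) * (-1) ^ i)
        (f := fun t => F (((i : ℝ) + 1) * t))
        (((hFc.comp (contDiff_const.mul contDiff_id)).contDiffWithinAt.of_le
          (by exact_mod_cast (le_top : (m : ℕ∞) ≤ ⊤))))
      simp only [iteratedDerivWithin_univ] at h2
      rw [h2, h1]
      norm_num
    rw [Finset.sum_congr rfl fun i _ => hterm i, Saux_def, Finset.sum_mul]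
    exact Finset.sum_congr rfl fun i _ => by ring
  have hzero : ∀ m, m < n → iteratedDeriv m G 0 = 0 := fun m hm => by
    rw [hGd m, (Saux_spec n).1 m hm, zero_mul]
  have hrate : Tendsto (fun t => G t / t ^ n) (𝓝[≠] (0 : ℝ))
      (𝓝 ((-1 : ℝ) ^ n * iteratedDeriv n F 0)) := by
    have hval : ((-1 : ℝ) ^ n * iteratedDeriv n F 0) = iteratedDeriv n G 0 / n.factorial := by
      rw [hGd n, (Saux_spec n).2]
      have : (n.factorial : ℝ) ≠ 0 := Nat.cast_ne_zero.mpr n.factorial_ne_zero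
      field_simp
    rw [hval]
    exact rate_lemma n G hGc hzero
  have hslope : Tendsto (fun t : ℝ => t / (1 - Real.exp t)) (𝓝[≠] (0 : ℝ)) (𝓝 (-1)) := by
    have h1 : Tendsto (slope Real.exp 0) (𝓝[≠] (0 : ℝ)) (𝓝 1) := by
      have h := Real.hasDerivAt_exp 0
      rw [hasDerivAt_iff_tendsto_slope] at h
      simpa using h
    have h2 := (h1.inv₀ one_ne_zero).neg
    refine Tendsto.congr' ?_ (by simpa only [inv_one] using h2)
    filter_upwards [self_mem_nhdsWithin] with t ht
    have ht' : t ≠ 0 := ht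
    rw [slope_def_field]
    simp only [Real.exp_zero, sub_zero]
    rw [inv_div, show (1 - Real.exp t) = -(Real.exp t - 1) by ring, div_neg]
  have hone : Tendsto (fun t : ℝ => (1 + Real.exp t) / 2) (𝓝[≠] (0 : ℝ)) (𝓝 1) := by
    have hc : Continuous (fun t : ℝ => (1 + Real.exp t) / 2) :=
      (continuous_const.add Real.continuous_exp).div_const 2
    have h := hc.tendsto (0 : ℝ)
    have h0 : (1 + Real.exp 0) / 2 = (1 : ℝ) := by simp [Real.exp_zero]
    rw [h0] at h
    exact h.mono_left nhdsWithin_le_nhds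
  have hH : Tendsto (fun t : ℝ =>
      ((1 + Real.exp t) / 2) * (G t / t ^ n) * (t / (1 - Real.exp t)) ^ n)
      (𝓝[≠] (0 : ℝ)) (𝓝 (iteratedDeriv n F 0)) := by
    have hprod := (hone.mul hrate).mul (hslope.pow n)
    have hval : (1 : ℝ) * ((-1 : ℝ) ^ n * iteratedDeriv n F 0) * (-1 : ℝ) ^ n
        = iteratedDeriv n F 0 := by
      have hsq : ((-1 : ℝ)) ^ n * ((-1 : ℝ)) ^ n = 1 := by
        rw [← mul_pow]; norm_num
      linear_combination iteratedDeriv n F 0 * hsq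
    rwa [hval] at hprod
  have hlog : Tendsto Real.log (𝓝[≠] (1 : ℝ)) (𝓝[≠] (0 : ℝ)) := by
    rw [tendsto_nhdsWithin_iff]
    constructor
    · have := (Real.continuousAt_log one_ne_zero).tendsto
      rw [Real.log_one] at this
      exact this.mono_left nhdsWithin_le_nhds
    · filter_upwards [self_mem_nhdsWithin,
        eventually_nhdsWithin_of_eventually_nhds (eventually_gt_nhds one_pos)] with q hq1 hq2
      intro h0
      rcases Real.log_eq_zero.mp h0 with h | h | h
      · linarith
      · exact hq1 h
      · linarith
  have hcomp := hH.comp hlog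
  refine Tendsto.congr' ?_ hcomp
  filter_upwards [self_mem_nhdsWithin,
    eventually_nhdsWithin_of_eventually_nhds (eventually_gt_nhds one_pos)] with q hq1 hq0
  have hq1' : q ≠ 1 := hq1
  have hexpq : Real.exp (Real.log q) = q := Real.exp_log hq0
  have ht : Real.log q ≠ 0 := by
    intro h0
    rcases Real.log_eq_zero.mp h0 with h | h | h
    · linarith
    · exact hq1' h
    · linarith
  set t := Real.log q with htdef
  have hGq : G t = ∑ i ∈ Finset.range (n + 1),
      ((n.choose i : ℝ) * (-1) ^ i) * (2 / (1 + q ^ (i + 1))) := by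
    rw [hG]
    refine Finset.sum_congr rfl fun i _ => ?_
    have hcast : ((i : ℝ) + 1) * t = ((i + 1 : ℕ) : ℝ) * t := by push_cast; ring
    rw [hcast]
    have : Real.exp (((i + 1 : ℕ) : ℝ) * t) = q ^ (i + 1) := by
      rw [Real.exp_nat_mul, hexpq]
    simp only [hF, this]
    rw [add_comm (q ^ (i + 1)) 1]
  show ((1 + Real.exp t) / 2) * (G t / t ^ n) * (t / (1 - Real.exp t)) ^ n
      = (1 + q) * (1 / (1 - q)) ^ n *
        ∑ i ∈ Finset.range (n + 1), (n.choose i : ℝ) * (-1) ^ i / (1 + q ^ (i + 1))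
  rw [hexpq, hGq]
  have hS : (∑ i ∈ Finset.range (n + 1),
      ((n.choose i : ℝ) * (-1) ^ i) * (2 / (1 + q ^ (i + 1))))
      = 2 * ∑ i ∈ Finset.range (n + 1), (n.choose i : ℝ) * (-1) ^ i / (1 + q ^ (i + 1)) := by
    rw [Finset.mul_sum]
    exact Finset.sum_congr rfl fun i _ => by ring
  rw [hS]
  have h1q : (1 : ℝ) - q ≠ 0 := sub_ne_zero.mpr (fun h => hq1' h.symm)
  have htn : t ^ n ≠ 0 := pow_ne_zero _ ht
  rw [div_pow, one_div, inv_pow]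
  field_simp
end
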